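/- arXiv:1808.00131 — 17 statements merged into one kernel-verified Lean document; each statement's English description precedes it below -/
import Mathlib

section
/- Let n ≥ 1 and let P be a symmetric prior on Finset (Fin n) (i.e., a probability mass function P : Finset (Fin n) → ℝ with P T ≥ 0, ∑_T P T = 1, and P T depending only on the cardinality |T|). Suppose that for every payoff function v : Finset (Fin n) → ℝ the D-values sum to the grand performance: ∑_{i} ψ_i[v;P] = v(univ) − v(∅). Then (a) for every payoff function v and every i, ψ_i[v;P] equals the Shapley value Φ_i[v], and (b) there exists a real number η such that P T = (|T|)!·(n−|T|)!/(n+1)! + (−1)^{|T|}·η for every T ⊆ Fin n. -/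
open Finset

noncomputable section

/-- Expected marginal gain γ_i[v;P]. -/
def gainD (n : ℕ) (v P : Finset (Fin n) → ℝ) (i : Fin n) : ℝ :=
  ∑ T ∈ univ.filter (fun T : Finset (Fin n) => i ∈ T), P T * (v T - v (T.erase i))

/-- Expected marginal loss λ_i[v;P]. -/
def lossD (n : ℕ) (v P : Finset (Fin n) → ℝ) (i : Fin n) : ℝ :=
  ∑ T ∈ univ.filter (fun T : Finset (Fin n) => i ∉ T), P T * (v (insert i T) - v T)

/-- The D-value ψ_i[v;P]. -/
def dVal (n : ℕ) (v P : Finset (Fin n) → ℝ) (i : Fin n) : ℝ :=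
  gainD n v P i + lossD n v P i

/-- The Shapley value Φ_i[v]. -/
def shapley (n : ℕ) (v : Finset (Fin n) → ℝ) (i : Fin n) : ℝ :=
  ∑ T ∈ univ.filter (fun T : Finset (Fin n) => i ∈ T),
    ((Nat.factorial (T.card - 1) * Nat.factorial (n - T.card) : ℝ) / (Nat.factorial n : ℝ))
      * (v T - v (T.erase i))

lemma card_canon (n k : ℕ) (hk : k ≤ n) :
    ((univ : Finset (Fin n)).filter (fun j : Fin n => (j : ℕ) < k)).card = k := by
  have h : ((univ : Finset (Fin n)).filter (fun j : Fin n => (j : ℕ) < k))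
      = Finset.map (Fin.castLEEmb hk) univ := by
    ext j
    simp only [mem_filter, mem_univ, true_and, Finset.mem_map]
    constructor
    · intro hj; exact ⟨⟨j, hj⟩, by simp [Fin.ext_iff]⟩
    · rintro ⟨a, -, rfl⟩; exact a.2
  rw [h, Finset.card_map, Finset.card_univ, Fintype.card_fin]

lemma dVal_eq (n : ℕ) (v P : Finset (Fin n) → ℝ) (i : Fin n) :
    dVal n v P i = ∑ S ∈ univ.filter (fun S : Finset (Fin n) => i ∈ S),
      (P S + P (S.erase i)) * (v S - v (S.erase i)) := by
  have hl : lossD n v P i = ∑ S ∈ univ.filter (fun S : Finset (Fin n) => i ∈ S),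
      P (S.erase i) * (v S - v (S.erase i)) := by
    unfold lossD
    refine Finset.sum_nbij' (fun T => insert i T) (fun S => S.erase i) ?_ ?_ ?_ ?_ ?_
    · intro T hT; simp only [mem_filter, mem_univ, true_and] at hT ⊢
      exact mem_insert_self i T
    · intro S hS; simp only [mem_filter, mem_univ, true_and] at hS ⊢
      exact notMem_erase i S
    · intro T hT; simp only [mem_filter, mem_univ, true_and] at hT
      exact erase_insert hT
    · intro S hS; simp only [mem_filter, mem_univ, true_and] at hS
      exact insert_erase hS
    · intro T hT; simp only [mem_filter, mem_univ, true_and] at hT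
      rw [erase_insert hT]
  unfold dVal gainD
  rw [hl, ← Finset.sum_add_distrib]
  exact Finset.sum_congr rfl (fun S _ => by ring)

theorem stmt_0 (n : ℕ) (hn : 1 ≤ n) (P : Finset (Fin n) → ℝ)
    (hP0 : ∀ T : Finset (Fin n), 0 ≤ P T)
    (hP1 : ∑ T : Finset (Fin n), P T = 1)
    (hsym : ∀ T Z : Finset (Fin n), T.card = Z.card → P T = P Z)
    (heff : ∀ v : Finset (Fin n) → ℝ, ∑ i : Fin n, dVal n v P i = v univ - v ∅) :
    (∀ (v : Finset (Fin n) → ℝ) (i : Fin n), dVal n v P i = shapley n v i) ∧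
    ∃ η : ℝ, ∀ T : Finset (Fin n),
      P T = (Nat.factorial T.card * Nat.factorial (n - T.card) : ℝ)
              / (Nat.factorial (n + 1) : ℝ) + (-1 : ℝ) ^ T.card * η := by
  classical
  -- canonical set of each cardinality
  set canon : ℕ → Finset (Fin n) :=
    fun k => (univ : Finset (Fin n)).filter (fun j : Fin n => (j : ℕ) < k) with hcanon
  set p : ℕ → ℝ := fun k => P (canon k) with hpdef
  have hcard : ∀ k, k ≤ n → (canon k).card = k := fun k hk => card_canon n k hk
  have hp : ∀ T : Finset (Fin n), P T = p T.card := by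
    intro T
    have hTn : T.card ≤ n := by
      simpa using Finset.card_le_univ T
    exact hsym T (canon T.card) ((hcard T.card hTn).symm)
  -- the key linear equations
  have key : ∀ Z : Finset (Fin n),
      (Z.card : ℝ) * (p Z.card + p (Z.card - 1))
        - ((n - Z.card : ℕ) : ℝ) * (p (Z.card + 1) + p Z.card)
      = (if Z = univ then (1:ℝ) else 0) - (if Z = ∅ then (1:ℝ) else 0) := by
    intro Z
    set v : Finset (Fin n) → ℝ := fun T => if T = Z then 1 else 0 with hv
    have hEff := heff v
    have inner : ∀ i : Fin n, dVal n v P i =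
        (if i ∈ Z then p Z.card + p (Z.card - 1) else 0)
          - (if i ∉ Z then p (Z.card + 1) + p Z.card else 0) := by
      intro i
      rw [dVal_eq]
      by_cases hiZ : i ∈ Z
      · rw [Finset.sum_eq_single_of_mem Z (by simp [hiZ])]
        · have h1 : v Z = 1 := by simp [hv]
          have h2 : v (Z.erase i) = 0 := by
            simp only [hv]
            rw [if_neg (by intro h; exact absurd hiZ (by rw [← h]; exact notMem_erase i Z))]
          have h3 : P (Z.erase i) = p (Z.card - 1) := by
            rw [hp, card_erase_of_mem hiZ]
          rw [h1, h2, h3, hp Z, if_pos hiZ, if_neg (by simp [hiZ])]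
          ring
        · intro S hS hSZ
          simp only [mem_filter, mem_univ, true_and] at hS
          have h1 : v S = 0 := by simp [hv, hSZ]
          have h2 : v (S.erase i) = 0 := by
            simp only [hv]
            rw [if_neg (by exact fun h => (notMem_erase i S) (h ▸ hiZ))]
          rw [h1, h2]; ring
      · rw [Finset.sum_eq_single_of_mem (insert i Z) (by simp)]
        · have h1 : v (insert i Z) = 0 := by
            simp only [hv]
            rw [if_neg (fun h : insert i Z = Z => hiZ (h ▸ mem_insert_self i Z))]
          have h2 : (insert i Z).erase i = Z := erase_insert hiZ
          have h3 : v ((insert i Z).erase i) = 1 := by simp [hv, h2]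
          have h4 : P (insert i Z) = p (Z.card + 1) := by
            rw [hp, card_insert_of_notMem hiZ]
          rw [h1, h3, h2, h4, hp Z, if_neg hiZ, if_pos hiZ]
          ring
        · intro S hS hSne
          simp only [mem_filter, mem_univ, true_and] at hS
          have h1 : v S = 0 := by
            simp only [hv]
            rw [if_neg (fun h : S = Z => hiZ (h ▸ hS))]
          have h2 : v (S.erase i) = 0 := by
            simp only [hv]
            rw [if_neg (fun h => hSne (by rw [← insert_erase hS, h]))]
          rw [h1, h2]; ring
    rw [Finset.sum_congr rfl (fun i _ => inner i)] at hEff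
    rw [Finset.sum_sub_distrib] at hEff
    have c1 : ∑ i : Fin n, (if i ∈ Z then p Z.card + p (Z.card - 1) else 0)
        = (Z.card : ℝ) * (p Z.card + p (Z.card - 1)) := by
      rw [Finset.sum_ite_mem, Finset.univ_inter, Finset.sum_const, nsmul_eq_mul]
    have c2 : ∑ i : Fin n, (if i ∉ Z then p (Z.card + 1) + p Z.card else 0)
        = ((n - Z.card : ℕ) : ℝ) * (p (Z.card + 1) + p Z.card) := by
      rw [← Finset.sum_filter, Finset.sum_const, nsmul_eq_mul]
      have hfc : (univ.filter (fun i : Fin n => i ∉ Z)) = Zᶜ := by ext j; simp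
      rw [hfc, Finset.card_compl, Fintype.card_fin]
    rw [c1, c2] at hEff
    have hru : v univ = (if Z = univ then (1:ℝ) else 0) := by
      simp only [hv]; by_cases h : Z = univ <;> simp [h, eq_comm]
    have hre : v ∅ = (if Z = ∅ then (1:ℝ) else 0) := by
      simp only [hv]; by_cases h : Z = ∅ <;> simp [h, eq_comm]
    rw [hru, hre] at hEff
    exact hEff
  -- equations indexed by cardinality
  have keyk : ∀ k, k ≤ n →
      (k : ℝ) * (p k + p (k - 1)) - ((n - k : ℕ) : ℝ) * (p (k + 1) + p k)
      = (if k = n then (1:ℝ) else 0) - (if k = 0 then (1:ℝ) else 0) := by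
    intro k hk
    have h := key (canon k)
    rw [hcard k hk] at h
    have e1 : (canon k = univ) ↔ (k = n) := by
      constructor
      · intro he
        have := hcard k hk
        rw [he, Finset.card_univ, Fintype.card_fin] at this
        omega
      · intro he
        apply Finset.eq_univ_of_card
        rw [hcard k hk, Fintype.card_fin]
        exact he
    have e2 : (canon k = ∅) ↔ (k = 0) := by
      constructor
      · intro he
        have := hcard k hk
        rw [he, Finset.card_empty] at this
        omega
      · intro he
        have : (canon k).card = 0 := by rw [hcard k hk, he]
        exact Finset.card_eq_zero.mp this
    simp only [e1, e2] at h
    exact h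
  have hfacn0 : (Nat.factorial n : ℝ) ≠ 0 := by
    exact_mod_cast Nat.factorial_ne_zero n
  -- the telescoping recursion for q
  have hq : ∀ s, s < n → p (s + 1) + p s
      = ((Nat.factorial s * Nat.factorial (n - 1 - s) : ℕ) : ℝ) / (Nat.factorial n : ℝ) := by
    intro s
    induction s with
    | zero =>
      intro h0
      have h := keyk 0 (Nat.zero_le n)
      rw [if_neg (by omega), if_pos rfl] at h
      simp only [Nat.cast_zero, zero_mul, Nat.sub_zero, zero_sub] at h
      have h' : (n : ℝ) * (p 1 + p 0) = 1 := by linarith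
      have hm : n - 1 + 1 = n := by omega
      have hfac : (Nat.factorial n : ℝ) = (n : ℝ) * (Nat.factorial (n - 1) : ℝ) := by
        calc (Nat.factorial n : ℝ) = (Nat.factorial (n - 1 + 1) : ℝ) := by rw [hm]
        _ = (((n - 1 + 1) * Nat.factorial (n - 1) : ℕ) : ℝ) := by rw [Nat.factorial_succ]
        _ = (n : ℝ) * (Nat.factorial (n - 1) : ℝ) := by push_cast [hm]; ring
      have hn0 : (n : ℝ) ≠ 0 := by positivity
      have hf0 : (Nat.factorial (n - 1) : ℝ) ≠ 0 := by
        exact_mod_cast Nat.factorial_ne_zero (n - 1)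
      rw [Nat.sub_zero]  -- n - 1 - 0 = n - 1
      apply mul_left_cancel₀ hn0
      rw [h']
      rw [hfac]
      push_cast [Nat.factorial_zero]
      field_simp
    | succ s ih =>
      intro hs
      have hqs := ih (by omega)
      have h := keyk (s + 1) (by omega)
      rw [if_neg (by omega), if_neg (by omega)] at h
      obtain ⟨m, hm⟩ : ∃ m, n - 1 - s = m + 1 := ⟨n - s - 2, by omega⟩
      have hm1 : n - (s + 1) = m + 1 := by omega
      have hm2 : n - 1 - (s + 1) = m := by omega
      rw [hm] at hqs
      rw [hm1] at h
      rw [hm2]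
      simp only [Nat.add_sub_cancel, sub_zero] at h
      have h' : ((m : ℝ) + 1) * (p (s + 2) + p (s + 1))
          = ((s : ℝ) + 1) * (p (s + 1) + p s) := by
        push_cast at h
        linarith
      have hne : ((m : ℝ) + 1) ≠ 0 := by positivity
      apply mul_left_cancel₀ hne
      rw [h', hqs]
      push_cast [Nat.factorial_succ]
      ring
  -- Part (a)
  have ha : ∀ (v : Finset (Fin n) → ℝ) (i : Fin n), dVal n v P i = shapley n v i := by
    intro v i
    rw [dVal_eq]
    unfold shapley
    apply Finset.sum_congr rfl
    intro S hS
    simp only [mem_filter, mem_univ, true_and] at hS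
    have h1 : 1 ≤ S.card := Finset.card_pos.mpr ⟨i, hS⟩
    have h2 : S.card ≤ n := by simpa using Finset.card_le_univ S
    congr 1
    rw [hp S, hp (S.erase i), card_erase_of_mem hS]
    have hlt : S.card - 1 < n := by omega
    have := hq (S.card - 1) hlt
    rw [show S.card - 1 + 1 = S.card by omega] at this
    rw [show n - 1 - (S.card - 1) = n - S.card by omega] at this
    rw [this]
    push_cast
    ring
  refine ⟨ha, ?_⟩
  -- Part (b)
  set η : ℝ := p 0 - ((Nat.factorial 0 * Nat.factorial n : ℕ) : ℝ) / (Nat.factorial (n + 1) : ℝ)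
    with hη
  have hfacn1 : ((Nat.factorial (n + 1) : ℕ) : ℝ)
      = ((n : ℝ) + 1) * (Nat.factorial n : ℝ) := by
    push_cast [Nat.factorial_succ]; ring
  have hfn1 : ((Nat.factorial (n + 1) : ℕ) : ℝ) ≠ 0 := by
    exact_mod_cast Nat.factorial_ne_zero (n + 1)
  have claim : ∀ s, s ≤ n →
      p s = ((Nat.factorial s * Nat.factorial (n - s) : ℕ) : ℝ) / (Nat.factorial (n + 1) : ℝ)
        + (-1 : ℝ) ^ s * η := by
    intro s
    induction s with
    | zero =>
      intro _
      rw [Nat.sub_zero]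
      simp only [pow_zero, one_mul, hη]
      ring
    | succ s ih =>
      intro hs1
      have hsn : s < n := by omega
      have hihs := ih (by omega)
      have hstep := hq s hsn
      obtain ⟨m, hm⟩ : ∃ m, n - 1 - s = m := ⟨n - 1 - s, rfl⟩
      have hm1 : n - s = m + 1 := by omega
      have hm2 : n - (s + 1) = m := by omega
      have hnR : (n : ℝ) = (s : ℝ) + (m : ℝ) + 1 := by
        have : n = s + m + 1 := by omega
        exact_mod_cast congrArg (Nat.cast : ℕ → ℝ) this
      rw [hm] at hstep
      rw [hm1] at hihs
      rw [hm2]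
      have hps1 : p (s + 1)
          = ((Nat.factorial s * Nat.factorial m : ℕ) : ℝ) / (Nat.factorial n : ℝ)
            - ((Nat.factorial s * Nat.factorial (m + 1) : ℕ) : ℝ) / (Nat.factorial (n + 1) : ℝ)
            - (-1 : ℝ) ^ s * η := by
        rw [← hstep, hihs]; ring
      rw [hps1]
      have hC : ((Nat.factorial s * Nat.factorial m : ℕ) : ℝ) / (Nat.factorial n : ℝ)
          - ((Nat.factorial s * Nat.factorial (m + 1) : ℕ) : ℝ) / (Nat.factorial (n + 1) : ℝ)
          = ((Nat.factorial (s + 1) * Nat.factorial m : ℕ) : ℝ) / (Nat.factorial (n + 1) : ℝ) := by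
        rw [hfacn1]
        push_cast [Nat.factorial_succ]
        field_simp
        rw [hnR]
        ring
      rw [hC, pow_succ]
      ring
  refine ⟨η, ?_⟩
  intro T
  have hTn : T.card ≤ n := by simpa using Finset.card_le_univ T
  rw [hp T, claim T.card hTn]
  push_cast
  ring
end
end

section
/- Let n ≥ 1 and η ∈ ℝ, and suppose P : Finset (Fin n) → ℝ is a probability mass function given by P T = (|T|)!·(n−|T|)!/(n+1)! + (−1)^{|T|}·η for every T ⊆ Fin n (with P T ≥ 0 for all T and ∑_T P T = 1). Then for every payoff function v : Finset (Fin n) → ℝ and every i, the D-value ψ_i[v;P] equals the Shapley value Φ_i[v]. -/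
open Finset

noncomputable section

theorem stmt_1 (n : ℕ) (hn : 1 ≤ n) (η : ℝ) (P : Finset (Fin n) → ℝ)
    (hP : ∀ T : Finset (Fin n),
      P T = (Nat.factorial T.card * Nat.factorial (n - T.card) : ℝ)
              / (Nat.factorial (n + 1) : ℝ) + (-1 : ℝ) ^ T.card * η)
    (hP0 : ∀ T : Finset (Fin n), 0 ≤ P T)
    (hP1 : ∑ T : Finset (Fin n), P T = 1)
    (v : Finset (Fin n) → ℝ) (i : Fin n) :
    dVal n v P i = shapley n v i := by
  have hloss : lossD n v P i =
      ∑ T ∈ univ.filter (fun T : Finset (Fin n) => i ∈ T),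
        P (T.erase i) * (v T - v (T.erase i)) := by
    unfold lossD
    refine Finset.sum_nbij' (fun T => insert i T) (fun T => T.erase i) ?_ ?_ ?_ ?_ ?_
    · intro T hT; simp at hT ⊢
    · intro T hT; simp at hT ⊢
    · intro T hT; simp at hT; exact Finset.erase_insert hT
    · intro T hT; simp at hT; exact Finset.insert_erase hT
    · intro T hT; simp at hT
      rw [Finset.erase_insert hT]
  unfold dVal gainD shapley
  rw [hloss, ← Finset.sum_add_distrib]
  refine Finset.sum_congr rfl ?_
  intro T hT
  simp only [mem_filter] at hT
  rw [← add_mul]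
  congr 1
  rw [hP, hP]
  have hcard : T.card = (T.erase i).card + 1 := by
    rw [Finset.card_erase_of_mem hT.2]
    have : 0 < T.card := Finset.card_pos.2 ⟨i, hT.2⟩
    omega
  have hsn : T.card ≤ n := by
    simpa using Finset.card_le_univ T
  set s := (T.erase i).card with hs
  obtain ⟨m, hm⟩ : ∃ m, n = s + 1 + m := ⟨n - (s+1), by omega⟩
  rw [hcard, Nat.add_sub_cancel, show n - (s+1) = m by omega,
    show n - s = m + 1 by omega, hm]
  have e1 : (s + 1 + m + 1).factorial = (s + 1 + m + 1) * (s + 1 + m).factorial :=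
    Nat.factorial_succ _
  have e2 : (s + 1).factorial = (s + 1) * s.factorial := Nat.factorial_succ _
  have e3 : (m + 1).factorial = (m + 1) * m.factorial := Nat.factorial_succ _
  rw [e1, e2, e3, pow_succ]
  have f1 : ((s + 1 + m).factorial : ℝ) ≠ 0 := Nat.cast_ne_zero.2 (Nat.factorial_ne_zero _)
  have f2 : ((s : ℝ) + 1 + m + 1) ≠ 0 := by positivity
  push_cast
  field_simp
  ring
end
end

section
/- Let n ≥ 1 and η ∈ ℝ with |η| ≤ 1/2^n, and suppose P : Finset (Fin n) → ℝ is the probability mass function P T = 1/2^n + (−1)^{|T|}·η for every T ⊆ Fin n. Then for every payoff function v : Finset (Fin n) → ℝ and every i, the D-value ψ_i[v;P] equals the Banzhaf value b_i[v]. -/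
open Finset

noncomputable section

/-- The Banzhaf value b_i[v]. -/
def banzhaf (n : ℕ) (v : Finset (Fin n) → ℝ) (i : Fin n) : ℝ :=
  (1 / (2 : ℝ) ^ (n - 1)) *
    ∑ T ∈ univ.filter (fun T : Finset (Fin n) => i ∈ T), (v T - v (T.erase i))

theorem stmt_2 (n : ℕ) (hn : 1 ≤ n) (η : ℝ) (hη : |η| ≤ 1 / 2 ^ n)
    (P : Finset (Fin n) → ℝ)
    (hP : ∀ T : Finset (Fin n), P T = 1 / (2 : ℝ) ^ n + (-1 : ℝ) ^ T.card * η)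
    (v : Finset (Fin n) → ℝ) (i : Fin n) :
    dVal n v P i = banzhaf n v i := by
  have key : lossD n v P i =
      ∑ T ∈ univ.filter (fun T : Finset (Fin n) => i ∈ T),
        P (T.erase i) * (v T - v (T.erase i)) := by
    rw [lossD]
    apply Finset.sum_nbij' (fun T => insert i T) (fun T => T.erase i)
    · intro T hT; simp only [mem_filter, mem_univ, true_and] at hT ⊢
      exact mem_insert_self i T
    · intro T hT; simp only [mem_filter, mem_univ, true_and] at hT ⊢
      exact notMem_erase i T
    · intro T hT; simp only [mem_filter, mem_univ, true_and] at hT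
      exact Finset.erase_insert hT
    · intro T hT; simp only [mem_filter, mem_univ, true_and] at hT
      exact Finset.insert_erase hT
    · intro T hT; simp only [mem_filter, mem_univ, true_and] at hT
      rw [Finset.erase_insert hT]
  rw [dVal, key, gainD, ← Finset.sum_add_distrib, banzhaf, Finset.mul_sum]
  apply Finset.sum_congr rfl
  intro T hT
  simp only [mem_filter, mem_univ, true_and] at hT
  obtain ⟨m, hm⟩ : ∃ m, T.card = m + 1 :=
    ⟨T.card - 1, by have := Finset.card_pos.mpr ⟨i, hT⟩; omega⟩
  have hsum : P T + P (T.erase i) = 1 / 2 ^ (n - 1) := by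
    rw [hP, hP, Finset.card_erase_of_mem hT, hm]
    have hn' : (2:ℝ) ^ n = 2 ^ (n-1) * 2 := by
      rw [← pow_succ]; congr 1; omega
    simp only [Nat.add_sub_cancel]
    rw [hn']
    have h2 : ((2:ℝ) ^ (n-1)) ≠ 0 := by positivity
    field_simp
    ring
  calc P T * (v T - v (T.erase i)) + P (T.erase i) * (v T - v (T.erase i))
      = (P T + P (T.erase i)) * (v T - v (T.erase i)) := by ring
    _ = 1 / 2 ^ (n - 1) * (v T - v (T.erase i)) := by rw [hsum]
end
end

section
/- Let n ≥ 1 and let P : Finset (Fin n) → ℝ be a probability mass function (P T ≥ 0, ∑_T P T = 1). If for every payoff function v : Finset (Fin n) → ℝ and every i the D-value ψ_i[v;P] equals the Banzhaf value b_i[v], then there exists a real number η with |η| ≤ 1/2^n such that P T = 1/2^n + (−1)^{|T|}·η for every T ⊆ Fin n. -/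
open Finset

noncomputable section

theorem stmt_3 (n : ℕ) (hn : 1 ≤ n) (P : Finset (Fin n) → ℝ)
    (hP0 : ∀ T : Finset (Fin n), 0 ≤ P T)
    (hP1 : ∑ T : Finset (Fin n), P T = 1)
    (hbv : ∀ (v : Finset (Fin n) → ℝ) (i : Fin n), dVal n v P i = banzhaf n v i) :
    ∃ η : ℝ, |η| ≤ 1 / 2 ^ n ∧
      ∀ T : Finset (Fin n), P T = 1 / (2 : ℝ) ^ n + (-1 : ℝ) ^ T.card * η := by
  -- Key relation: for i ∈ S, P S + P (S.erase i) = 1 / 2^(n-1)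
  have key : ∀ (S : Finset (Fin n)) (i : Fin n), i ∈ S →
      P S + P (S.erase i) = 1 / (2 : ℝ) ^ (n - 1) := by
    intro S i hiS
    set v : Finset (Fin n) → ℝ := fun T => if T = S then 1 else 0 with hv
    have hES : S.erase i ≠ S := by
      intro h
      exact (Finset.erase_eq_self.mp h) hiS
    have hg : gainD n v P i = P S := by
      unfold gainD
      rw [Finset.sum_eq_single S]
      · simp [hv, hES]
      · intro T hT hTS
        have h1 : v T = 0 := if_neg hTS
        have h2 : v (T.erase i) = 0 := by
          apply if_neg
          intro h
          exact (Finset.notMem_erase i T) (h ▸ hiS)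
        simp [h1, h2]
      · intro hS
        exact absurd (mem_filter.mpr ⟨mem_univ S, hiS⟩) hS
    have hl : lossD n v P i = P (S.erase i) := by
      unfold lossD
      rw [Finset.sum_eq_single (S.erase i)]
      · have h1 : v (insert i (S.erase i)) = 1 := by
          rw [Finset.insert_erase hiS]; exact if_pos rfl
        have h2 : v (S.erase i) = 0 := if_neg hES
        simp [h1, h2]
      · intro T hT hTS
        simp only [mem_filter, mem_univ, true_and] at hT
        have h1 : v T = 0 := if_neg (by intro h; exact hT (h ▸ hiS))
        have h2 : v (insert i T) = 0 := by
          apply if_neg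
          intro h
          apply hTS
          have := congrArg (fun s => s.erase i) h
          simpa [Finset.erase_insert hT] using this
        simp [h1, h2]
      · intro hS
        exfalso
        apply hS
        simp [Finset.notMem_erase]
    have hb : banzhaf n v i = 1 / (2 : ℝ) ^ (n - 1) := by
      unfold banzhaf
      rw [Finset.sum_eq_single S]
      · simp [hv, hES]
      · intro T hT hTS
        have h1 : v T = 0 := if_neg hTS
        have h2 : v (T.erase i) = 0 := by
          apply if_neg
          intro h
          exact (Finset.notMem_erase i T) (h ▸ hiS)
        simp [h1, h2]
      · intro hS
        exact absurd (mem_filter.mpr ⟨mem_univ S, hiS⟩) hS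
    have := hbv v i
    rw [dVal, hg, hl, hb] at this
    exact this
  have hpow : (2 : ℝ) ^ n = 2 * 2 ^ (n - 1) := by
    conv_lhs => rw [← Nat.succ_pred_eq_of_pos hn]
    rw [pow_succ']
    rfl
  have hpos : (0 : ℝ) < 2 ^ n := by positivity
  have hpos' : (0 : ℝ) < 2 ^ (n - 1) := by positivity
  set η : ℝ := P ∅ - 1 / 2 ^ n with hη
  have hformula : ∀ T : Finset (Fin n),
      P T = 1 / (2 : ℝ) ^ n + (-1 : ℝ) ^ T.card * η := by
    intro T
    induction T using Finset.induction_on with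
    | empty => simp [hη]
    | @insert i T hiT ih =>
      have hk := key (insert i T) i (Finset.mem_insert_self i T)
      rw [Finset.erase_insert hiT] at hk
      rw [Finset.card_insert_of_notMem hiT]
      have h1 : 1 / (2 : ℝ) ^ (n - 1) = 2 / 2 ^ n := by
        rw [hpow]; field_simp
      rw [h1, ih] at hk
      rw [pow_succ]
      linear_combination hk
  refine ⟨η, ?_, hformula⟩
  rw [abs_le]
  constructor
  · have := hP0 ∅
    rw [hformula ∅] at this
    simp at this
    rw [one_div]
    linarith
  · have := hP0 {⟨0, hn⟩}
    rw [hformula {⟨0, hn⟩}] at this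
    simp at this
    rw [one_div]
    linarith
end
end

section
/- Let n ≥ 1, η ∈ (0,1), and let P : Finset (Fin n) → ℝ be the binomial prior P T = η^{|T|}·(1−η)^{n−|T|}. Then for every payoff function v : Finset (Fin n) → ℝ and every i: ψ_i[v;P] = (1/η)·γ_i[v;P] = (1/(1−η))·λ_i[v;P] = ∑_{T ⊆ Fin n, i ∈ T} η^{|T|−1}·(1−η)^{n−|T|}·(v T − v (T \ {i})). -/
open Finset

noncomputable section

theorem stmt_4 (n : ℕ) (hn : 1 ≤ n) (η : ℝ) (hη : η ∈ Set.Ioo (0 : ℝ) 1)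
    (P : Finset (Fin n) → ℝ)
    (hP : ∀ T : Finset (Fin n), P T = η ^ T.card * (1 - η) ^ (n - T.card))
    (v : Finset (Fin n) → ℝ) (i : Fin n) :
    dVal n v P i = (1 / η) * gainD n v P i ∧
    dVal n v P i = (1 / (1 - η)) * lossD n v P i ∧
    dVal n v P i = ∑ T ∈ univ.filter (fun T : Finset (Fin n) => i ∈ T),
      η ^ (T.card - 1) * (1 - η) ^ (n - T.card) * (v T - v (T.erase i)) := by
  obtain ⟨hη0, hη1⟩ := hη
  set S := ∑ T ∈ univ.filter (fun T : Finset (Fin n) => i ∈ T),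
      η ^ (T.card - 1) * (1 - η) ^ (n - T.card) * (v T - v (T.erase i)) with hS
  have hg : gainD n v P i = η * S := by
    rw [gainD, hS, Finset.mul_sum]
    apply Finset.sum_congr rfl
    intro T hT
    simp only [mem_filter] at hT
    have hc : 1 ≤ T.card := Finset.card_pos.mpr ⟨i, hT.2⟩
    have : η ^ T.card = η * η ^ (T.card - 1) := by
      rw [← pow_succ', Nat.sub_add_cancel hc]
    rw [hP, this]; ring
  have hl : lossD n v P i = (1 - η) * S := by
    rw [lossD, hS, Finset.mul_sum]
    apply Finset.sum_nbij' (i := fun T => insert i T) (j := fun T => T.erase i)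
    · intro T hT
      simp only [mem_filter] at hT ⊢
      exact ⟨mem_univ _, mem_insert_self i T⟩
    · intro T hT
      simp only [mem_filter] at hT ⊢
      exact ⟨mem_univ _, notMem_erase i T⟩
    · intro T hT
      simp only [mem_filter] at hT
      exact erase_insert hT.2
    · intro T hT
      simp only [mem_filter] at hT
      exact insert_erase hT.2
    · intro T hT
      simp only [mem_filter] at hT
      have hcard : (insert i T).card = T.card + 1 := card_insert_of_notMem hT.2
      have hlt : T.card < n := by
        have := Finset.card_le_univ T
        rcases lt_or_eq_of_le this with h | h
        · simpa using h
        · exfalso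
          have : T = univ := Finset.eq_univ_of_card T (by simpa using h)
          exact hT.2 (this ▸ mem_univ i)
      have h1 : (1 - η) ^ (n - T.card) = (1 - η) * (1 - η) ^ (n - (T.card + 1)) := by
        rw [← pow_succ']
        congr 1
        omega
      rw [hP, hcard, erase_insert hT.2, h1, Nat.add_sub_cancel]
      ring
  have hηne : η ≠ 0 := ne_of_gt hη0
  have h1ηne : (1 : ℝ) - η ≠ 0 := by linarith
  have hd : dVal n v P i = S := by
    rw [dVal, hg, hl]; ring
  refine ⟨?_, ?_, by rw [hd]⟩
  · rw [hd, hg]; field_simp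
  · rw [hd, hl]; field_simp
end
end

section
/- Let n ≥ 1 and let P be a symmetric prior on Finset (Fin n) (a probability mass function with P T depending only on |T|). Then the identity ∑_{i} λ_i[v;P] = (∑_{T ⊆ Fin n} P T · v T) − v(∅) holds for every payoff function v : Finset (Fin n) → ℝ if and only if P T = (|T|)!·(n−|T|)!/(n+1)! for every T ⊆ Fin n. -/
open Finset

noncomputable section

/-- The candidate prior. -/
def fform (n : ℕ) (S : Finset (Fin n)) : ℝ :=
  (Nat.factorial S.card * Nat.factorial (n - S.card) : ℝ) / (Nat.factorial (n + 1) : ℝ)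

/-- The per-set equation. -/
def eqnP (n : ℕ) (P : Finset (Fin n) → ℝ) (S : Finset (Fin n)) : Prop :=
  (∑ i ∈ S, P (S.erase i)) - ((n : ℝ) - S.card) * P S
    = P S - (if S = ∅ then 1 else 0)

lemma coeffQ (n : ℕ) (v P : Finset (Fin n) → ℝ) :
    ∑ i : Fin n, lossD n v P i
      = ∑ S : Finset (Fin n),
          ((∑ i ∈ S, P (S.erase i)) - ((n : ℝ) - S.card) * P S) * v S := by
  unfold lossD
  have h1 : ∀ i : Fin n,
      ∑ T ∈ univ.filter (fun T : Finset (Fin n) => i ∉ T), P T * v (insert i T)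
        = ∑ S ∈ univ.filter (fun S : Finset (Fin n) => i ∈ S), P (S.erase i) * v S := by
    intro i
    apply Finset.sum_nbij' (fun T => insert i T) (fun S => S.erase i)
    · intro T hT; simp only [mem_filter, mem_univ, true_and] at *
      exact mem_insert_self i T
    · intro S hS; simp only [mem_filter, mem_univ, true_and] at *
      exact notMem_erase i S
    · intro T hT; simp only [mem_filter, mem_univ, true_and] at hT
      exact erase_insert hT
    · intro S hS; simp only [mem_filter, mem_univ, true_and] at hS
      exact insert_erase hS
    · intro T hT; simp only [mem_filter, mem_univ, true_and] at hT
      rw [erase_insert hT]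
  have step : ∀ i : Fin n,
      ∑ T ∈ univ.filter (fun T : Finset (Fin n) => i ∉ T), P T * (v (insert i T) - v T)
        = (∑ S ∈ univ.filter (fun S : Finset (Fin n) => i ∈ S), P (S.erase i) * v S)
          - ∑ T ∈ univ.filter (fun T : Finset (Fin n) => i ∉ T), P T * v T := by
    intro i
    rw [← h1 i, ← Finset.sum_sub_distrib]
    exact Finset.sum_congr rfl (fun T _ => by ring)
  rw [Finset.sum_congr rfl (fun i _ => step i), Finset.sum_sub_distrib]
  have hA : ∑ i : Fin n, ∑ S ∈ univ.filter (fun S : Finset (Fin n) => i ∈ S), P (S.erase i) * v S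
      = ∑ S : Finset (Fin n), (∑ i ∈ S, P (S.erase i)) * v S := by
    simp only [Finset.sum_filter]
    rw [Finset.sum_comm]
    refine Finset.sum_congr rfl (fun S _ => ?_)
    rw [Finset.sum_mul, ← Finset.sum_filter]
    simp [Finset.filter_univ_mem]
  have hB : ∑ i : Fin n, ∑ T ∈ univ.filter (fun T : Finset (Fin n) => i ∉ T), P T * v T
      = ∑ S : Finset (Fin n), ((n : ℝ) - S.card) * (P S * v S) := by
    simp only [Finset.sum_filter]
    rw [Finset.sum_comm]
    refine Finset.sum_congr rfl (fun S _ => ?_)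
    rw [← Finset.sum_filter, Finset.sum_const, Finset.filter_not, Finset.filter_univ_mem]
    have : (univ \ S).card = n - S.card := by
      rw [Finset.card_sdiff_of_subset (subset_univ S)]
      simp
    rw [this, nsmul_eq_mul, Nat.cast_sub (by simpa using Finset.card_le_univ S)]
  rw [hA, hB, ← Finset.sum_sub_distrib]
  exact Finset.sum_congr rfl (fun S _ => by ring)

lemma nat_fact_step (n k : ℕ) (h1 : 1 ≤ k) (h2 : k ≤ n) :
    k * (Nat.factorial (k-1) * Nat.factorial (n - (k-1)))
      = (n - k + 1) * (Nat.factorial k * Nat.factorial (n - k)) := by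
  obtain ⟨k', rfl⟩ : ∃ k', k = k' + 1 := ⟨k - 1, by omega⟩
  have h3 : n - k' = (n - (k' + 1)) + 1 := by omega
  simp only [Nat.add_sub_cancel, h3, Nat.factorial_succ]
  ring

lemma form_eqn (n : ℕ) (S : Finset (Fin n)) : eqnP n (fform n) S := by
  unfold eqnP fform
  rcases eq_or_ne S ∅ with rfl | hne
  · have hfac : (Nat.factorial (n+1) : ℝ) ≠ 0 := by positivity
    simp only [Finset.sum_empty, Finset.card_empty, Nat.cast_zero, if_pos rfl,
      Nat.factorial_zero, Nat.sub_zero, Nat.cast_one, one_mul]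
    rw [Nat.factorial_succ]
    push_cast
    field_simp
    ring
  · have hk1 : 1 ≤ S.card := Finset.card_pos.mpr (Finset.nonempty_of_ne_empty hne)
    have hkn : S.card ≤ n := by simpa using Finset.card_le_univ S
    set k := S.card with hk
    have hfac : (Nat.factorial (n+1) : ℝ) ≠ 0 := by positivity
    have hsum : ∑ i ∈ S, (Nat.factorial (S.erase i).card *
          Nat.factorial (n - (S.erase i).card) : ℝ) / (Nat.factorial (n + 1) : ℝ)
        = k * ((Nat.factorial (k-1) * Nat.factorial (n - (k-1)) : ℝ)
            / (Nat.factorial (n+1) : ℝ)) := by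
      rw [Finset.sum_congr rfl (fun i hi => by
        rw [Finset.card_erase_of_mem hi]), Finset.sum_const, ← hk, nsmul_eq_mul]
    rw [hsum, if_neg hne]
    have hnat := nat_fact_step n k hk1 hkn
    have hcast : ((n - k + 1 : ℕ) : ℝ) = (n : ℝ) - k + 1 := by
      push_cast [Nat.cast_sub hkn]; ring
    have hR : (k : ℝ) * (Nat.factorial (k-1) * Nat.factorial (n - (k-1)) : ℝ)
        = ((n:ℝ) - k + 1) * (Nat.factorial k * Nat.factorial (n - k) : ℝ) := by
      rw [← hcast]
      exact_mod_cast congrArg (fun x : ℕ => (x : ℝ)) hnat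
    field_simp
    nlinarith [hR]

lemma uniq (n : ℕ) (P : Finset (Fin n) → ℝ) (hkey : ∀ S, eqnP n P S) :
    ∀ S, P S = fform n S := by
  suffices h : ∀ k : ℕ, ∀ S : Finset (Fin n), S.card = k → P S = fform n S by
    exact fun S => h S.card S rfl
  intro k
  induction k with
  | zero =>
    intro S hS
    have h1 := hkey S
    have h2 := form_eqn n S
    unfold eqnP at h1 h2
    rw [Finset.card_eq_zero] at hS
    subst hS
    simp only [Finset.sum_empty, Finset.card_empty, Nat.cast_zero] at h1 h2
    have hpos : (0:ℝ) ≤ (n:ℝ) := by positivity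
    nlinarith [h1, h2]
  | succ k ih =>
    intro S hS
    have h1 := hkey S
    have h2 := form_eqn n S
    unfold eqnP at h1 h2
    have hsum : ∑ i ∈ S, P (S.erase i) = ∑ i ∈ S, fform n (S.erase i) :=
      Finset.sum_congr rfl (fun i hi => ih (S.erase i)
        (by rw [Finset.card_erase_of_mem hi, hS]; rfl))
    rw [hsum] at h1
    have hkn : S.card ≤ n := by simpa using Finset.card_le_univ S
    have hpos : (0:ℝ) < (n:ℝ) - S.card + 1 := by
      have : (S.card : ℝ) ≤ n := by exact_mod_cast hkn
      linarith
    nlinarith [h1, h2]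

theorem stmt_5 (n : ℕ) (hn : 1 ≤ n) (P : Finset (Fin n) → ℝ)
    (hP0 : ∀ T : Finset (Fin n), 0 ≤ P T)
    (hP1 : ∑ T : Finset (Fin n), P T = 1)
    (hsym : ∀ T Z : Finset (Fin n), T.card = Z.card → P T = P Z) :
    (∀ v : Finset (Fin n) → ℝ,
        ∑ i : Fin n, lossD n v P i = (∑ T : Finset (Fin n), P T * v T) - v ∅) ↔
    (∀ T : Finset (Fin n),
        P T = (Nat.factorial T.card * Nat.factorial (n - T.card) : ℝ)
                / (Nat.factorial (n + 1) : ℝ)) := by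
  constructor
  · intro h T
    have hkey : ∀ S : Finset (Fin n), eqnP n P S := by
      intro S
      have hv := h (fun T => if T = S then 1 else 0)
      rw [coeffQ] at hv
      unfold eqnP
      have hL : ∑ S' : Finset (Fin n),
          ((∑ i ∈ S', P (S'.erase i)) - ((n : ℝ) - S'.card) * P S')
            * (if S' = S then 1 else 0)
          = (∑ i ∈ S, P (S.erase i)) - ((n : ℝ) - S.card) * P S := by
        rw [Finset.sum_congr rfl (fun S' _ => by
          rw [mul_ite, mul_one, mul_zero]), Finset.sum_ite_eq' univ S]
        simp
      have hR : ∑ T : Finset (Fin n), P T * (if T = S then 1 else 0) = P S := by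
        rw [Finset.sum_congr rfl (fun T _ => by
          rw [mul_ite, mul_one, mul_zero]), Finset.sum_ite_eq' univ S]
        simp
      rw [hL, hR] at hv
      rw [hv]
      congr 1
      by_cases hS : S = ∅ <;> simp [hS, eq_comm]
    exact uniq n P hkey T
  · intro hF v
    have hPf : P = fform n := funext (fun T => hF T)
    rw [coeffQ]
    have : ∑ S : Finset (Fin n),
        ((∑ i ∈ S, P (S.erase i)) - ((n : ℝ) - S.card) * P S) * v S
        = ∑ S : Finset (Fin n), (P S - (if S = ∅ then 1 else 0)) * v S := by
      refine Finset.sum_congr rfl (fun S _ => ?_)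
      have := form_eqn n S
      unfold eqnP at this
      rw [hPf, this]
    rw [this]
    rw [Finset.sum_congr rfl (fun S _ => by ring :
      ∀ S ∈ univ, (P S - (if S = ∅ then 1 else 0)) * v S
        = P S * v S - (if S = ∅ then 1 else 0) * v S)]
    rw [Finset.sum_sub_distrib]
    congr 1
    rw [Finset.sum_congr rfl (fun S _ => by
      rw [ite_mul, one_mul, zero_mul]), Finset.sum_ite_eq' univ ∅]
    simp
end
end

section
/- Let n ≥ 1 and let P be a symmetric prior on Finset (Fin n) (a probability mass function with P T depending only on |T|). Then the identity ∑_{i} γ_i[v;P] = (∑_{T ⊆ Fin n} P T · v T) − v(∅) holds for every payoff function v : Finset (Fin n) → ℝ if and only if P assigns total probability 1 to subsets of cardinality at most 1, i.e., ∑_{T : |T| ≤ 1} P T = 1. -/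
open Finset

noncomputable section

lemma sum_gain (n : ℕ) (v P : Finset (Fin n) → ℝ) :
    ∑ i : Fin n, gainD n v P i
      = ∑ T : Finset (Fin n), P T * ∑ i ∈ T, (v T - v (T.erase i)) := by
  unfold gainD
  simp_rw [Finset.sum_filter]
  rw [Finset.sum_comm]
  refine Finset.sum_congr rfl fun T _ => ?_
  rw [Finset.mul_sum, ← Finset.sum_filter]
  congr 1
  ext i; simp


theorem stmt_6 (n : ℕ) (hn : 1 ≤ n) (P : Finset (Fin n) → ℝ)
    (hP0 : ∀ T : Finset (Fin n), 0 ≤ P T)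
    (hP1 : ∑ T : Finset (Fin n), P T = 1)
    (hsym : ∀ T Z : Finset (Fin n), T.card = Z.card → P T = P Z) :
    (∀ v : Finset (Fin n) → ℝ,
        ∑ i : Fin n, gainD n v P i = (∑ T : Finset (Fin n), P T * v T) - v ∅) ↔
    (∑ T ∈ univ.filter (fun T : Finset (Fin n) => T.card ≤ 1), P T = 1) := by
  constructor
  · intro h
    have key := h (fun T => ((T.card : ℝ))^2)
    rw [sum_gain] at key
    -- simplify inner sums
    have hinner : ∀ T : Finset (Fin n),
        P T * ∑ i ∈ T, (((T.card : ℝ))^2 - ((((T.erase i).card : ℕ)) : ℝ)^2)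
          = P T * ((T.card : ℝ)^2 + (T.card : ℝ) * ((T.card : ℝ) - 1)) := by
      intro T
      rcases Nat.eq_zero_or_pos T.card with h0 | hpos
      · rw [Finset.card_eq_zero] at h0; subst h0; simp
      · congr 1
        have : ∀ i ∈ T, ((T.card : ℝ))^2 - (((T.erase i).card : ℕ) : ℝ)^2
            = 2*(T.card : ℝ) - 1 := by
          intro i hi
          rw [Finset.card_erase_of_mem hi, Nat.cast_sub hpos]
          push_cast; ring
        rw [Finset.sum_congr rfl this, Finset.sum_const, nsmul_eq_mul]
        ring
    rw [Finset.sum_congr rfl (fun T _ => hinner T)] at key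
    simp only [Finset.card_empty, Nat.cast_zero] at key
    have hz : ∑ T : Finset (Fin n), P T * ((T.card : ℝ) * ((T.card : ℝ) - 1)) = 0 := by
      have := key
      simp only [mul_add] at this
      rw [Finset.sum_add_distrib] at this
      linarith [this]
    have hnn : ∀ T ∈ (univ : Finset (Finset (Fin n))),
        0 ≤ P T * ((T.card : ℝ) * ((T.card : ℝ) - 1)) := by
      intro T _
      apply mul_nonneg (hP0 T)
      rcases Nat.eq_zero_or_pos T.card with h0 | hpos
      · simp [h0]
      · apply mul_nonneg (by positivity)
        have : (1:ℝ) ≤ (T.card : ℝ) := by exact_mod_cast hpos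
        linarith
    have hterm := (Finset.sum_eq_zero_iff_of_nonneg hnn).mp hz
    have hPzero : ∀ T : Finset (Fin n), ¬ T.card ≤ 1 → P T = 0 := by
      intro T hT
      have h2 : (2:ℝ) ≤ (T.card : ℝ) := by exact_mod_cast Nat.lt_of_not_le hT
      have := hterm T (mem_univ T)
      have hpos : 0 < (T.card : ℝ) * ((T.card : ℝ) - 1) := by nlinarith
      exact (mul_eq_zero.mp this).resolve_right (ne_of_gt hpos)
    rw [← hP1, ← Finset.sum_filter_add_sum_filter_not univ (fun T => T.card ≤ 1) P]
    rw [Finset.sum_eq_zero (fun T hT => hPzero T (mem_filter.mp hT).2)]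
    ring
  · intro hfil v
    have hPzero : ∀ T : Finset (Fin n), ¬ T.card ≤ 1 → P T = 0 := by
      have hsplit : ∑ T ∈ univ.filter (fun T : Finset (Fin n) => ¬ T.card ≤ 1), P T = 0 := by
        have := Finset.sum_filter_add_sum_filter_not univ (fun T : Finset (Fin n) => T.card ≤ 1) P
        rw [hfil, hP1] at this; linarith
      intro T hT
      exact (Finset.sum_eq_zero_iff_of_nonneg (fun T _ => hP0 T)).mp hsplit T
        (mem_filter.mpr ⟨mem_univ T, hT⟩)
    rw [sum_gain]
    have hve : v ∅ = ∑ T : Finset (Fin n), P T * v ∅ := by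
      rw [← Finset.sum_mul, hP1, one_mul]
    rw [hve, ← Finset.sum_sub_distrib]
    refine Finset.sum_congr rfl fun T _ => ?_
    rcases le_or_gt T.card 1 with hc | hc
    · interval_cases h : T.card
      · rw [Finset.card_eq_zero] at h; subst h; simp
      · obtain ⟨i, rfl⟩ := Finset.card_eq_one.mp h
        rw [Finset.sum_singleton, Finset.erase_singleton]
        ring
    · rw [hPzero T (not_le.mpr hc)]; ring
end
end

section
/- Let n ≥ 1 and let P : Finset (Fin n) → ℝ be a probability mass function. Then the endowment bias κ_i[v;P] equals 0 for every payoff function v : Finset (Fin n) → ℝ and every i if and only if P T = 1/2^n for every T ⊆ Fin n. -/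
open Finset

noncomputable section

/-- The endowment bias κ_i[v;P]. -/
def biasD (n : ℕ) (v P : Finset (Fin n) → ℝ) (i : Fin n) : ℝ :=
  gainD n v P i - lossD n v P i

theorem stmt_9 (n : ℕ) (hn : 1 ≤ n) (P : Finset (Fin n) → ℝ)
    (hP0 : ∀ T : Finset (Fin n), 0 ≤ P T)
    (hP1 : ∑ T : Finset (Fin n), P T = 1) :
    (∀ (v : Finset (Fin n) → ℝ) (i : Fin n), biasD n v P i = 0) ↔
    (∀ T : Finset (Fin n), P T = 1 / (2 : ℝ) ^ n) := by
  constructor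
  · intro h
    have key : ∀ (S : Finset (Fin n)) (i : Fin n), i ∈ S → P S = P (S.erase i) := by
      intro S i hi
      have hb := h (fun T => if T = S then (1:ℝ) else 0) i
      unfold biasD gainD lossD at hb
      have hg : (∑ T ∈ univ.filter (fun T : Finset (Fin n) => i ∈ T),
          P T * ((if T = S then (1:ℝ) else 0) - (if T.erase i = S then (1:ℝ) else 0))) = P S := by
        rw [Finset.sum_eq_single S]
        · have h2 : S.erase i ≠ S := by
            simp [Finset.erase_eq_self, hi]
          simp [h2]
        · intro T hT hne
          have h2 : T.erase i ≠ S := by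
            intro he
            exact (he ▸ Finset.notMem_erase i T) hi
          simp [hne, h2]
        · intro hS
          exact absurd (Finset.mem_filter.mpr ⟨Finset.mem_univ S, hi⟩) hS
      have hl : (∑ T ∈ univ.filter (fun T : Finset (Fin n) => i ∉ T),
          P T * ((if insert i T = S then (1:ℝ) else 0) - (if T = S then (1:ℝ) else 0))) = P (S.erase i) := by
        rw [Finset.sum_eq_single (S.erase i)]
        · have h1 : insert i (S.erase i) = S := Finset.insert_erase hi
          have h2 : S.erase i ≠ S := by simp [Finset.erase_eq_self, hi]
          simp [h1, h2]
        · intro T hT hne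
          have hiT : i ∉ T := (Finset.mem_filter.mp hT).2
          have h1 : insert i T ≠ S := by
            intro he
            apply hne
            rw [← he, Finset.erase_insert hiT]
          have h2 : T ≠ S := fun he => hiT (he ▸ hi)
          simp [h1, h2]
        · intro hS
          exact absurd (by simp : S.erase i ∈ univ.filter (fun T : Finset (Fin n) => i ∉ T)) hS
      simp only [hg, hl] at hb
      linarith
    have const : ∀ (m : ℕ) (T : Finset (Fin n)), T.card = m → P T = P ∅ := by
      intro m
      induction m with
      | zero => intro T hT; rw [Finset.card_eq_zero.mp hT]
      | succ k ih =>
        intro T hT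
        have hne : T.Nonempty := Finset.card_pos.mp (by omega)
        obtain ⟨i, hi⟩ := hne
        rw [key T i hi]
        exact ih _ (by rw [Finset.card_erase_of_mem hi, hT]; omega)
    intro T
    have hsum : ∑ S : Finset (Fin n), P S = (2:ℝ)^n * P ∅ := by
      rw [Finset.sum_congr rfl (fun S _ => const S.card S rfl)]
      simp [Finset.card_univ, mul_comm]
    rw [const T.card T rfl]
    rw [hsum] at hP1
    field_simp
    linarith
  · intro h v i
    unfold biasD gainD lossD
    have heq : (∑ T ∈ univ.filter (fun T : Finset (Fin n) => i ∈ T), P T * (v T - v (T.erase i)))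
        = ∑ T ∈ univ.filter (fun T : Finset (Fin n) => i ∉ T), P T * (v (insert i T) - v T) := by
      refine Finset.sum_bij' (fun T _ => T.erase i) (fun T _ => insert i T) ?_ ?_ ?_ ?_ ?_
      all_goals intro T hT
      all_goals simp only [Finset.mem_filter, Finset.mem_univ, true_and] at hT ⊢
      all_goals first
        | exact Finset.notMem_erase i T
        | exact Finset.mem_insert_self i T
        | exact Finset.insert_erase hT
        | exact Finset.erase_insert hT
        | rw [h T, h (T.erase i), Finset.insert_erase hT]
    rw [heq]; ring
end
end

section
/- Let n ≥ 1 and let P be a symmetric prior on Finset (Fin n) (a probability mass function with P T depending only on |T|). Then the aggregate endowment bias ∑_{i} κ_i[v;P] equals 0 for every payoff function v : Finset (Fin n) → ℝ if and only if P T = 1/2^n for every T ⊆ Fin n. -/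
open Finset

noncomputable section

lemma bias_const (n : ℕ) (v : Finset (Fin n) → ℝ) (c : ℝ) (i : Fin n) :
    biasD n v (fun _ => c) i = 0 := by
  have h : gainD n v (fun _ => c) i = lossD n v (fun _ => c) i := by
    unfold gainD lossD
    refine Finset.sum_bij' (fun T _ => T.erase i) (fun T _ => insert i T) ?_ ?_ ?_ ?_ ?_
    · intro T hT; simp
    · intro T hT; simp at hT; simp [hT]
    · intro T hT; simp at hT; simp [Finset.insert_erase hT]
    · intro T hT; simp at hT; simp [Finset.erase_insert hT]
    · intro T hT; simp at hT; rw [Finset.insert_erase hT]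
  simp [biasD, h]

lemma bias_ind (n : ℕ) (P : Finset (Fin n) → ℝ) (S : Finset (Fin n)) (i : Fin n) :
    biasD n (fun T => if T = S then (1:ℝ) else 0) P i =
      if i ∈ S then P S - P (S.erase i) else P S - P (insert i S) := by
  unfold biasD gainD lossD
  by_cases h : i ∈ S
  · have hg : (∑ T ∈ univ.filter (fun T : Finset (Fin n) => i ∈ T),
        P T * ((if T = S then (1:ℝ) else 0) - (if T.erase i = S then (1:ℝ) else 0)))
        = P S := by
      rw [Finset.sum_eq_single S]
      · have : S.erase i ≠ S := by
          intro he
          exact (Finset.notMem_erase i S) (by rw [he]; exact h)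
        simp [this]
      · intro T hT hne
        simp only [mem_filter, mem_univ, true_and] at hT
        have h2 : T.erase i ≠ S := by
          intro he
          exact (Finset.notMem_erase i T) (by rw [he]; exact h)
        simp [hne, h2]
      · intro hS; simp [h] at hS
    have hl : (∑ T ∈ univ.filter (fun T : Finset (Fin n) => i ∉ T),
        P T * ((if insert i T = S then (1:ℝ) else 0) - (if T = S then (1:ℝ) else 0)))
        = P (S.erase i) := by
      rw [Finset.sum_eq_single (S.erase i)]
      · have h1 : insert i (S.erase i) = S := Finset.insert_erase h
        have h2 : S.erase i ≠ S := by
          intro he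
          exact (Finset.notMem_erase i S) (by rw [he]; exact h)
        simp [h1, h2]
      · intro T hT hne
        simp only [mem_filter, mem_univ, true_and] at hT
        have h1 : insert i T ≠ S := by
          intro he
          apply hne
          rw [← he, Finset.erase_insert hT]
        have h2 : T ≠ S := by
          intro he; exact hT (he ▸ h)
        simp [h1, h2]
      · intro hS; simp at hS
    rw [hg, hl]; simp [h]
  · have hg : (∑ T ∈ univ.filter (fun T : Finset (Fin n) => i ∈ T),
        P T * ((if T = S then (1:ℝ) else 0) - (if T.erase i = S then (1:ℝ) else 0)))
        = -P (insert i S) := by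
      rw [Finset.sum_eq_single (insert i S)]
      · have h1 : (insert i S).erase i = S := Finset.erase_insert h
        have h2 : insert i S ≠ S := by
          intro he; exact h (he ▸ Finset.mem_insert_self i S)
        simp [h1, h2]
      · intro T hT hne
        simp only [mem_filter, mem_univ, true_and] at hT
        have h1 : T ≠ S := by
          intro he; exact h (he ▸ hT)
        have h2 : T.erase i ≠ S := by
          intro he
          apply hne
          rw [← he, Finset.insert_erase hT]
        simp [h1, h2]
      · intro hS; simp [Finset.mem_insert_self] at hS
    have hl : (∑ T ∈ univ.filter (fun T : Finset (Fin n) => i ∉ T),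
        P T * ((if insert i T = S then (1:ℝ) else 0) - (if T = S then (1:ℝ) else 0)))
        = -P S := by
      rw [Finset.sum_eq_single S]
      · have h1 : insert i S ≠ S := by
          intro he; exact h (he ▸ Finset.mem_insert_self i S)
        simp [h1]
      · intro T hT hne
        simp only [mem_filter, mem_univ, true_and] at hT
        have h1 : insert i T ≠ S := by
          intro he; exact h (he ▸ Finset.mem_insert_self i T)
        simp [h1, hne]
      · intro hS; simp [h] at hS
    rw [hg, hl]; simp [h]; ring

lemma key_id (n : ℕ) (P : Finset (Fin n) → ℝ) (S : Finset (Fin n))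
    (H : ∑ i : Fin n, biasD n (fun T => if T = S then (1:ℝ) else 0) P i = 0) :
    (n : ℝ) * P S = ∑ i ∈ Sᶜ, P (insert i S) + ∑ i ∈ S, P (S.erase i) := by
  simp only [bias_ind] at H
  rw [Finset.sum_ite] at H
  have h1 : univ.filter (fun i : Fin n => i ∈ S) = S := by ext; simp
  have h2 : univ.filter (fun i : Fin n => i ∉ S) = Sᶜ := by ext; simp
  rw [h1, h2, Finset.sum_sub_distrib, Finset.sum_sub_distrib, Finset.sum_const,
    Finset.sum_const, Finset.card_compl] at H
  have hc : S.card ≤ n := by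
    simpa using Finset.card_le_card (Finset.subset_univ S)
  have : ((n - S.card : ℕ) : ℝ) = (n : ℝ) - S.card := by
    rw [Nat.cast_sub hc]
  simp only [Fintype.card_fin, nsmul_eq_mul, this] at H
  linarith

theorem stmt_10 (n : ℕ) (hn : 1 ≤ n) (P : Finset (Fin n) → ℝ)
    (hP0 : ∀ T : Finset (Fin n), 0 ≤ P T)
    (hP1 : ∑ T : Finset (Fin n), P T = 1)
    (hsym : ∀ T Z : Finset (Fin n), T.card = Z.card → P T = P Z) :
    (∀ v : Finset (Fin n) → ℝ, ∑ i : Fin n, biasD n v P i = 0) ↔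
    (∀ T : Finset (Fin n), P T = 1 / (2 : ℝ) ^ n) := by
  constructor
  · intro H
    -- step 1: all values equal P ∅
    have claim : ∀ k : ℕ, ∀ T : Finset (Fin n), T.card = k → P T = P ∅ := by
      intro k
      induction k using Nat.strong_induction_on with
      | _ k IH =>
        intro T hT
        match k, hT with
        | 0, hT =>
          rw [Finset.card_eq_zero] at hT
          rw [hT]
        | (k+1), hT =>
          have hne : T.Nonempty := Finset.card_pos.mp (by omega)
          obtain ⟨i, hi⟩ := hne
          set S := T.erase i with hS
          have hScard : S.card = k := by
            simp [hS, Finset.card_erase_of_mem hi, hT]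
          have hkey := key_id n P S (H _)
          have hPS : P S = P ∅ := IH k (by omega) S hScard
          have hins : ∀ j ∈ Sᶜ, P (insert j S) = P T := by
            intro j hj
            apply hsym
            rw [Finset.card_insert_of_notMem (by simpa using hj), hScard, hT]
          have hera : ∀ j ∈ S, P (S.erase j) = P ∅ := by
            intro j hj
            apply IH (k-1) (by omega)
            rw [Finset.card_erase_of_mem hj, hScard]
          rw [Finset.sum_congr rfl hins, Finset.sum_congr rfl hera,
            Finset.sum_const, Finset.sum_const, Finset.card_compl, hScard, hPS] at hkey
          have hcard : k + 1 ≤ n := by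
            have := Finset.card_le_card (Finset.subset_univ T)
            simpa [hT] using this
          have hnk : ((n - k : ℕ) : ℝ) = (n : ℝ) - k := by
            rw [Nat.cast_sub (by omega)]
          simp only [Fintype.card_fin, nsmul_eq_mul, hnk] at hkey
          have hpos : (n : ℝ) - k > 0 := by
            have : (k : ℝ) < n := by exact_mod_cast (by omega : k < n)
            linarith
          have : ((n : ℝ) - k) * P T = ((n : ℝ) - k) * P ∅ := by linarith
          exact mul_left_cancel₀ (ne_of_gt hpos) this
    have hall : ∀ T : Finset (Fin n), P T = P ∅ := fun T => claim T.card T rfl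
    have hsum : (2 : ℝ) ^ n * P ∅ = 1 := by
      rw [← hP1, Finset.sum_congr rfl (fun T _ => hall T), Finset.sum_const]
      simp [Finset.card_univ, mul_comm]
    intro T
    rw [hall T]
    field_simp at hsum ⊢
    linarith
  · intro h v
    have hPc : P = fun _ => 1 / (2 : ℝ) ^ n := funext h
    rw [hPc]
    simp [bias_const]
end
end

section
/- Let n ≥ 1 and let v : Finset (Fin n) → ℝ be a payoff function. Then π_t(v) = ω_{t+1}(v) for every t = 0, 1, …, n−1. Consequently, the following are equivalent: (1) ω_t(v) ≥ π_t(v) for all t = 1, …, n−1 (v has a diminishing marginal effect); (2) ω_t(v) is a decreasing function of t on {1,…,n} (v has a diminishing marginal gain); (3) π_t(v) is a decreasing function of t on {0,…,n−1} (v has a diminishing marginal loss). -/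
open Finset

noncomputable section

/-- Average marginal gain ω_t(v) at coalition size t. -/
def omegaD (n : ℕ) (v : Finset (Fin n) → ℝ) (t : ℕ) : ℝ :=
  ((Nat.factorial (t - 1) * Nat.factorial (n - t) : ℝ) / (Nat.factorial n : ℝ)) *
    ∑ T ∈ univ.filter (fun T : Finset (Fin n) => T.card = t),
      ∑ i ∈ T, (v T - v (T.erase i))

/-- Average marginal loss π_t(v) at coalition size t. -/
def piD (n : ℕ) (v : Finset (Fin n) → ℝ) (t : ℕ) : ℝ :=
  ((Nat.factorial t * Nat.factorial (n - t - 1) : ℝ) / (Nat.factorial n : ℝ)) *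
    ∑ T ∈ univ.filter (fun T : Finset (Fin n) => T.card = t),
      ∑ j ∈ Tᶜ, (v (insert j T) - v T)

lemma key_sum (n t : ℕ) (v : Finset (Fin n) → ℝ) :
    ∑ T ∈ univ.filter (fun T : Finset (Fin n) => T.card = t),
      ∑ j ∈ Tᶜ, (v (insert j T) - v T)
    = ∑ S ∈ univ.filter (fun S : Finset (Fin n) => S.card = t + 1),
      ∑ i ∈ S, (v S - v (S.erase i)) := by
  rw [Finset.sum_sigma', Finset.sum_sigma']
  apply Finset.sum_nbij' (i := fun p => ⟨insert p.2 p.1, p.2⟩)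
    (j := fun p => ⟨p.1.erase p.2, p.2⟩)
  · rintro ⟨T, j⟩ hp
    simp only [Finset.mem_sigma, mem_filter, mem_univ, true_and, mem_compl] at hp ⊢
    exact ⟨by rw [card_insert_of_notMem hp.2, hp.1], mem_insert_self _ _⟩
  · rintro ⟨S, i⟩ hp
    simp only [Finset.mem_sigma, mem_filter, mem_univ, true_and, mem_compl] at hp ⊢
    exact ⟨by rw [card_erase_of_mem hp.2, hp.1]; rfl, notMem_erase _ _⟩
  · rintro ⟨T, j⟩ hp
    simp only [Finset.mem_sigma, mem_filter, mem_univ, true_and, mem_compl] at hp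
    simp [erase_insert hp.2]
  · rintro ⟨S, i⟩ hp
    simp only [Finset.mem_sigma, mem_filter, mem_univ, true_and, mem_compl] at hp
    simp [insert_erase hp.2]
  · rintro ⟨T, j⟩ hp
    simp only [Finset.mem_sigma, mem_filter, mem_univ, true_and, mem_compl] at hp
    simp [erase_insert hp.2]

lemma pi_eq_omega (n : ℕ) (v : Finset (Fin n) → ℝ) (t : ℕ) :
    piD n v t = omegaD n v (t + 1) := by
  rw [piD, omegaD, key_sum, Nat.add_sub_cancel, Nat.sub_sub]

theorem stmt_11 (n : ℕ) (hn : 1 ≤ n) (v : Finset (Fin n) → ℝ) :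
    (∀ t : ℕ, t ≤ n - 1 → piD n v t = omegaD n v (t + 1)) ∧
    ((∀ t : ℕ, 1 ≤ t → t ≤ n - 1 → omegaD n v t ≥ piD n v t) ↔
      (∀ t : ℕ, 1 ≤ t → t + 1 ≤ n → omegaD n v t ≥ omegaD n v (t + 1))) ∧
    ((∀ t : ℕ, 1 ≤ t → t ≤ n - 1 → omegaD n v t ≥ piD n v t) ↔
      (∀ t : ℕ, t + 1 ≤ n - 1 → piD n v t ≥ piD n v (t + 1))) := by
  refine ⟨fun t _ => pi_eq_omega n v t, ?_, ?_⟩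
  · constructor
    · intro h t ht1 ht2
      rw [← pi_eq_omega n v t]
      exact h t ht1 (by omega)
    · intro h t ht1 ht2
      rw [pi_eq_omega n v t]
      exact h t ht1 (by omega)
  · constructor
    · intro h t ht
      rw [pi_eq_omega n v t, pi_eq_omega n v (t + 1)]
      rw [← pi_eq_omega n v (t + 1)]
      exact h (t + 1) (by omega) (by omega)
    · intro h t ht1 ht2
      obtain ⟨s, rfl⟩ : ∃ s, t = s + 1 := ⟨t - 1, by omega⟩
      rw [← pi_eq_omega n v s]
      exact h s (by omega)
end
end

section
/- Let n ≥ 1 and let P : Finset (Fin n) → ℝ be the prior P T = (|T|)!·(n−|T|)!/(n+1)!. If the payoff function v : Finset (Fin n) → ℝ has a diminishing marginal effect (ω_t(v) ≥ π_t(v) for all t = 1, …, n−1), then the aggregate endowment bias satisfies ∑_{i} κ_i[v;P] ≤ 0. -/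
open Finset

noncomputable section

def Aa (n : ℕ) (v : Finset (Fin n) → ℝ) (t : ℕ) : ℝ :=
  ∑ T ∈ univ.filter (fun T : Finset (Fin n) => T.card = t), ∑ i ∈ T, (v T - v (T.erase i))

def Bb (n : ℕ) (v : Finset (Fin n) → ℝ) (t : ℕ) : ℝ :=
  ∑ T ∈ univ.filter (fun T : Finset (Fin n) => T.card = t), ∑ j ∈ Tᶜ, (v (insert j T) - v T)

lemma Aa_zero (n : ℕ) (v : Finset (Fin n) → ℝ) : Aa n v 0 = 0 := by
  refine Finset.sum_eq_zero fun T hT => ?_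
  have : T = ∅ := Finset.card_eq_zero.mp (mem_filter.mp hT).2
  simp [this]

lemma Aa_top (n : ℕ) (v : Finset (Fin n) → ℝ) : Aa n v (n + 1) = 0 := by
  refine Finset.sum_eq_zero fun T hT => ?_
  have h := (mem_filter.mp hT).2
  have : T.card ≤ n := by simpa using Finset.card_le_univ T
  omega

lemma Aa_succ_eq_Bb (n t : ℕ) (v : Finset (Fin n) → ℝ) : Aa n v (t + 1) = Bb n v t := by
  unfold Aa Bb
  rw [Finset.sum_sigma' (univ.filter (fun T : Finset (Fin n) => T.card = t + 1))
      (fun T => T) (fun T i => v T - v (T.erase i)),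
    Finset.sum_sigma' (univ.filter (fun T : Finset (Fin n) => T.card = t))
      (fun T => Tᶜ) (fun T j => v (insert j T) - v T)]
  refine Finset.sum_bij' (fun p _ => ⟨p.1.erase p.2, p.2⟩) (fun p _ => ⟨insert p.2 p.1, p.2⟩)
      ?_ ?_ ?_ ?_ ?_
  · rintro ⟨T, i⟩ hp
    simp only [Finset.mem_sigma, mem_filter, mem_univ, true_and] at hp ⊢
    obtain ⟨hc, hi⟩ := hp
    refine ⟨by rw [Finset.card_erase_of_mem hi, hc]; rfl, by simp⟩
  · rintro ⟨S, j⟩ hp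
    simp only [Finset.mem_sigma, mem_filter, mem_univ, true_and, Finset.mem_compl] at hp ⊢
    obtain ⟨hc, hj⟩ := hp
    exact ⟨by rw [Finset.card_insert_of_notMem hj, hc], Finset.mem_insert_self _ _⟩
  · rintro ⟨T, i⟩ hp
    simp only [Finset.mem_sigma, mem_filter, mem_univ, true_and] at hp
    simp [Finset.insert_erase hp.2]
  · rintro ⟨S, j⟩ hp
    simp only [Finset.mem_sigma, mem_filter, mem_univ, true_and, Finset.mem_compl] at hp
    simp [Finset.erase_insert hp.2]
  · rintro ⟨T, i⟩ hp
    simp only [Finset.mem_sigma, mem_filter, mem_univ, true_and] at hp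
    simp [Finset.insert_erase hp.2]

def qq (n t : ℕ) : ℝ := (Nat.factorial t * Nat.factorial (n - t) : ℝ) / (Nat.factorial (n + 1) : ℝ)

def cc (n t : ℕ) : ℝ := (2 * (t : ℝ) - (n + 1)) / (n + 1)

lemma sum_swap_gain (n : ℕ) (P v : Finset (Fin n) → ℝ) :
    ∑ i : Fin n, gainD n v P i
      = ∑ T : Finset (Fin n), P T * ∑ i ∈ T, (v T - v (T.erase i)) := by
  unfold gainD
  simp only [Finset.sum_filter]
  rw [Finset.sum_comm]
  refine Finset.sum_congr rfl fun T _ => ?_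
  rw [Finset.sum_ite_mem, Finset.univ_inter, Finset.mul_sum]

lemma sum_swap_loss (n : ℕ) (P v : Finset (Fin n) → ℝ) :
    ∑ i : Fin n, lossD n v P i
      = ∑ T : Finset (Fin n), P T * ∑ j ∈ Tᶜ, (v (insert j T) - v T) := by
  unfold lossD
  simp only [Finset.sum_filter]
  rw [Finset.sum_comm]
  refine Finset.sum_congr rfl fun T _ => ?_
  simp only [← Finset.mem_compl]
  rw [Finset.sum_ite_mem, Finset.univ_inter, Finset.mul_sum]

lemma fiberwise (n : ℕ) (g : Finset (Fin n) → ℝ) (w : ℕ → ℝ) :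
    ∑ T : Finset (Fin n), w T.card * g T
      = ∑ t ∈ Finset.range (n + 1),
          w t * ∑ T ∈ univ.filter (fun T : Finset (Fin n) => T.card = t), g T := by
  rw [← Finset.sum_fiberwise_of_maps_to (g := fun T : Finset (Fin n) => T.card)
      (t := Finset.range (n + 1))
      (fun T _ => Finset.mem_range.mpr (Nat.lt_succ_of_le (by simpa using Finset.card_le_univ T)))
      (fun T => w T.card * g T)]
  refine Finset.sum_congr rfl fun t _ => ?_
  rw [Finset.mul_sum]
  exact Finset.sum_congr rfl fun T hT => by rw [(Finset.mem_filter.mp hT).2]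

lemma coef_identity (n t : ℕ) (ht : t < n) :
    qq n (t + 1) - qq n t
      = ((Nat.factorial (t + 1 - 1) * Nat.factorial (n - (t + 1)) : ℝ) / (Nat.factorial n : ℝ))
          * cc n (t + 1) := by
  have h1 : n - t = (n - t - 1) + 1 := by omega
  have h2 : n - (t + 1) = n - t - 1 := by omega
  have hx : ((n - t - 1 : ℕ) : ℝ) = (n : ℝ) - t - 1 := by
    have h : (n - t - 1) + (t + 1) = n := by omega
    have := congrArg (Nat.cast (R := ℝ)) h
    push_cast at this
    linarith
  have hf : (0 : ℝ) < (Nat.factorial n : ℝ) := by exact_mod_cast Nat.factorial_pos n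
  have hg : (0 : ℝ) < (Nat.factorial t : ℝ) := by exact_mod_cast Nat.factorial_pos t
  have hh : (0 : ℝ) < (Nat.factorial (n - t - 1) : ℝ) := by
    exact_mod_cast Nat.factorial_pos (n - t - 1)
  have hn1 : ((n : ℝ) + 1) ≠ 0 := by positivity
  unfold qq cc
  rw [h1, h2, Nat.add_sub_cancel, Nat.factorial_succ (n - t - 1), Nat.factorial_succ t,
    Nat.factorial_succ n]
  push_cast
  rw [hx]
  field_simp
  ring

lemma Csum (n m : ℕ) :
    ∑ j ∈ Finset.range m, cc n (j + 1) = (m : ℝ) * ((m : ℝ) - n) / (n + 1) := by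
  induction m with
  | zero => simp
  | succ m ih =>
    rw [Finset.sum_range_succ, ih]
    unfold cc
    have hn1 : ((n : ℝ) + 1) ≠ 0 := by positivity
    push_cast
    field_simp
    ring

lemma omegaD_eq (n t : ℕ) (v : Finset (Fin n) → ℝ) :
    omegaD n v t
      = ((Nat.factorial (t - 1) * Nat.factorial (n - t) : ℝ) / (Nat.factorial n : ℝ))
          * Aa n v t := rfl

lemma omega_succ_eq_piD (n t : ℕ) (v : Finset (Fin n) → ℝ) :
    omegaD n v (t + 1) = piD n v t := by
  have hAB := Aa_succ_eq_Bb n t v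
  unfold Aa Bb at hAB
  unfold omegaD piD
  rw [Nat.add_sub_cancel, hAB, Nat.sub_sub]

theorem stmt_12 (n : ℕ) (hn : 1 ≤ n) (P : Finset (Fin n) → ℝ)
    (hP : ∀ T : Finset (Fin n),
      P T = (Nat.factorial T.card * Nat.factorial (n - T.card) : ℝ)
              / (Nat.factorial (n + 1) : ℝ))
    (v : Finset (Fin n) → ℝ)
    (hdim : ∀ t : ℕ, 1 ≤ t → t ≤ n - 1 → omegaD n v t ≥ piD n v t) :
    ∑ i : Fin n, biasD n v P i ≤ 0 := by
  have hPq : ∀ T : Finset (Fin n), P T = qq n T.card := fun T => hP T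
  have hbias : ∑ i : Fin n, biasD n v P i
      = ∑ t ∈ Finset.range n, omegaD n v (t + 1) * cc n (t + 1) := by
    have e1 : ∑ i : Fin n, gainD n v P i
        = ∑ t ∈ Finset.range (n + 1), qq n t * Aa n v t := by
      rw [sum_swap_gain]
      rw [Finset.sum_congr rfl fun T _ => by rw [hPq T]]
      exact fiberwise n _ (qq n)
    have e2 : ∑ i : Fin n, lossD n v P i
        = ∑ t ∈ Finset.range (n + 1), qq n t * Aa n v (t + 1) := by
      rw [sum_swap_loss]
      rw [Finset.sum_congr rfl fun T _ => by rw [hPq T]]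
      rw [fiberwise n _ (qq n)]
      exact Finset.sum_congr rfl fun t _ => by
        rw [show Aa n v (t + 1) = _ from Aa_succ_eq_Bb n t v]; rfl
    have e3 : ∑ i : Fin n, biasD n v P i
        = ∑ t ∈ Finset.range (n + 1), qq n t * Aa n v t
          - ∑ t ∈ Finset.range (n + 1), qq n t * Aa n v (t + 1) := by
      simp only [biasD, Finset.sum_sub_distrib]
      rw [e1, e2]
    rw [e3, Finset.sum_range_succ' (fun t => qq n t * Aa n v t) n,
      Finset.sum_range_succ (fun t => qq n t * Aa n v (t + 1)) n,
      Aa_zero, Aa_top, mul_zero, mul_zero, add_zero, add_zero, ← Finset.sum_sub_distrib]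
    refine Finset.sum_congr rfl fun t ht => ?_
    rw [← sub_mul, coef_identity n t (Finset.mem_range.mp ht), omegaD_eq]
    ring
  rw [hbias]
  have habel := Finset.sum_range_by_parts (M := ℝ)
    (fun t => omegaD n v (t + 1)) (fun t => cc n (t + 1)) n
  simp only [smul_eq_mul] at habel
  rw [habel]
  simp only [Csum]
  have hz : (n : ℝ) - n = 0 := sub_self _
  rw [hz, mul_zero, zero_div, mul_zero, zero_sub, neg_nonpos]
  refine Finset.sum_nonneg fun i hi => ?_
  have hi' : i < n - 1 := Finset.mem_range.mp hi
  have hmono : omegaD n v (i + 1 + 1) - omegaD n v (i + 1) ≤ 0 := by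
    have := hdim (i + 1) (by omega) (by omega)
    rw [omega_succ_eq_piD n (i + 1) v]
    linarith
  have hC : ((i + 1 : ℕ) : ℝ) * (((i + 1 : ℕ) : ℝ) - n) / (n + 1) ≤ 0 := by
    have h1 : (0 : ℝ) ≤ ((i + 1 : ℕ) : ℝ) := by positivity
    have h2 : ((i + 1 : ℕ) : ℝ) - n ≤ 0 := by
      have : (i + 1 : ℕ) ≤ n := by omega
      have := (Nat.cast_le (α := ℝ)).mpr this
      linarith
    have h3 : (0 : ℝ) < (n : ℝ) + 1 := by positivity
    exact div_nonpos_of_nonpos_of_nonneg (mul_nonpos_of_nonneg_of_nonpos h1 h2) h3.le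
  nlinarith [hmono, hC]
end
end

section
/- Let n ≥ 1 and let P : Finset (Fin n) → ℝ be the prior P T = (|T|)!·(n−|T|)!/(n+1)!. If the payoff function v : Finset (Fin n) → ℝ is superadditive (v(S ∪ T) ≥ v S + v T for all disjoint S, T ⊆ Fin n) and v(∅) = 0, then the aggregate endowment bias satisfies ∑_{i} κ_i[v;P] ≥ 0. -/
open Finset

noncomputable section

/-- The symmetric prior weight. -/
def pw (n k : ℕ) : ℝ := (Nat.factorial k * Nat.factorial (n - k) : ℝ) / (Nat.factorial (n+1) : ℝ)

lemma pw_nonneg (n k : ℕ) : 0 ≤ pw n k := by unfold pw; positivity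

lemma natA (n k : ℕ) (h1 : 1 ≤ k) (h2 : k ≤ n) :
    k * ((k-1).factorial * (n-(k-1)).factorial) = (n-k+1) * (Nat.factorial k * (n-k).factorial) := by
  rw [show n-(k-1) = (n-k)+1 by omega, Nat.factorial_succ, ← Nat.mul_factorial_pred (Nat.one_le_iff_ne_zero.mp h1)]
  ring

lemma natB (n k : ℕ) (h2 : k < n) :
    (n-k) * ((k+1).factorial * (n-(k+1)).factorial) = (k+1) * (Nat.factorial k * (n-k).factorial) := by
  rw [show n-(k+1) = (n-k)-1 by omega, Nat.factorial_succ,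
    ← Nat.mul_factorial_pred (by omega : n - k ≠ 0)]
  ring

lemma coeff_mid (n k : ℕ) (h1 : 1 ≤ k) (h2 : k < n) :
    (k:ℝ) * (pw n k - pw n (k-1)) - ((n-k : ℕ):ℝ) * (pw n (k+1) - pw n k) = -2 * pw n k := by
  have hA : (k:ℝ) * ((k-1).factorial * (n-(k-1)).factorial)
      = (((n-k:ℕ):ℝ)+1) * (Nat.factorial k * (n-k).factorial) := by
    exact_mod_cast natA n k h1 h2.le
  have hB : ((n-k:ℕ):ℝ) * ((k+1).factorial * (n-(k+1)).factorial)
      = ((k:ℝ)+1) * (Nat.factorial k * (n-k).factorial) := by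
    exact_mod_cast natB n k h2
  have hD : ((n+1).factorial : ℝ) ≠ 0 := by positivity
  unfold pw
  field_simp
  linear_combination -hA - hB

lemma coeff_top (n : ℕ) (hn : 1 ≤ n) :
    (n:ℝ) * (pw n n - pw n (n-1)) = 1 - 2 * pw n n := by
  have h1 : n - n = 0 := by omega
  have h2 : n - (n-1) = 1 := by omega
  have h3 : (n:ℝ) * (n-1).factorial = n.factorial := by
    exact_mod_cast congrArg (Nat.cast (R := ℝ)) (Nat.mul_factorial_pred (Nat.one_le_iff_ne_zero.mp hn))
  have h4 : ((n+1).factorial : ℝ) = (n+1) * n.factorial := by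
    exact_mod_cast congrArg (Nat.cast (R := ℝ)) (Nat.factorial_succ n)
  have hD : ((n+1).factorial : ℝ) ≠ 0 := by positivity
  unfold pw
  rw [h1, h2]
  field_simp
  rw [h4]
  linear_combination -h3

lemma psum (n : ℕ) : ∑ S : Finset (Fin n), pw n S.card = 1 := by
  unfold pw
  rw [← Finset.powerset_univ, Finset.sum_powerset]
  have hcu : (univ : Finset (Fin n)).card = n := by simp
  rw [hcu]
  have h : ∀ j ∈ range (n+1), ∑ S ∈ powersetCard j (univ : Finset (Fin n)),
      (S.card.factorial * (n - S.card).factorial : ℝ)/(n+1).factorial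
      = (n.factorial : ℝ)/(n+1).factorial := by
    intro j hj
    have hj' : j ≤ n := Nat.lt_succ_iff.mp (mem_range.mp hj)
    have : ∀ S ∈ powersetCard j (univ : Finset (Fin n)),
        (S.card.factorial * (n - S.card).factorial : ℝ)/(n+1).factorial
        = (j.factorial * (n - j).factorial : ℝ)/(n+1).factorial := by
      intro S hS; rw [Finset.mem_powersetCard_univ.mp hS]
    rw [Finset.sum_congr rfl this, Finset.sum_const, Finset.card_powersetCard, hcu,
      nsmul_eq_mul]
    rw [← Nat.choose_mul_factorial_mul_factorial hj']
    push_cast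
    ring
  rw [Finset.sum_congr rfl h, Finset.sum_const, Finset.card_range, nsmul_eq_mul,
    Nat.factorial_succ]
  have : ((n+1).factorial : ℝ) ≠ 0 := by positivity
  push_cast
  field_simp

lemma compl_reindex (n : ℕ) (g : Finset (Fin n) → ℝ) :
    ∑ S : Finset (Fin n), g S = ∑ S : Finset (Fin n), g Sᶜ := by
  apply Finset.sum_nbij' (i := fun S => Sᶜ) (j := fun S => Sᶜ) <;> simp

lemma ins_bij (n : ℕ) (i : Fin n) (f : Finset (Fin n) → ℝ) :
    ∑ T ∈ univ.filter (fun T : Finset (Fin n) => i ∉ T), f (insert i T)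
      = ∑ S ∈ univ.filter (fun S : Finset (Fin n) => i ∈ S), f S := by
  apply Finset.sum_nbij' (i := fun T => insert i T) (j := fun S => S.erase i)
  · intro T hT; simp at hT ⊢
  · intro S hS; simp at hS ⊢
  · intro T hT; simp at hT; exact Finset.erase_insert hT
  · intro S hS; simp at hS; exact Finset.insert_erase hS
  · intro T hT; rfl

lemma swap_sum (n : ℕ) (f : Fin n → Finset (Fin n) → ℝ) :
    ∑ i : Fin n, ∑ S ∈ univ.filter (fun S : Finset (Fin n) => i ∈ S), f i S
      = ∑ S : Finset (Fin n), ∑ i ∈ S, f i S := by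
  simp_rw [Finset.sum_filter]
  rw [Finset.sum_comm]
  congr 1; ext S
  rw [← Finset.sum_filter (fun i => i ∈ S) (fun i => f i S), Finset.filter_mem_eq_inter,
    Finset.univ_inter]

lemma swap_sum' (n : ℕ) (f : Fin n → Finset (Fin n) → ℝ) :
    ∑ i : Fin n, ∑ T ∈ univ.filter (fun T : Finset (Fin n) => i ∉ T), f i T
      = ∑ T : Finset (Fin n), ∑ i ∈ Tᶜ, f i T := by
  simp_rw [Finset.sum_filter]
  rw [Finset.sum_comm]
  congr 1; ext T
  simp only [← Finset.mem_compl]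
  rw [← Finset.sum_filter (fun i => i ∈ Tᶜ) (fun i => f i T), Finset.filter_mem_eq_inter,
    Finset.univ_inter]

theorem stmt_13 (n : ℕ) (hn : 1 ≤ n) (P : Finset (Fin n) → ℝ)
    (hP : ∀ T : Finset (Fin n),
      P T = (Nat.factorial T.card * Nat.factorial (n - T.card) : ℝ)
              / (Nat.factorial (n + 1) : ℝ))
    (v : Finset (Fin n) → ℝ)
    (hsuper : ∀ S T : Finset (Fin n), Disjoint S T → v S + v T ≤ v (S ∪ T))
    (hv0 : v ∅ = 0) :
    0 ≤ ∑ i : Fin n, biasD n v P i := by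
  have hPp : ∀ T : Finset (Fin n), P T = pw n T.card := fun T => hP T
  have hcard : ∀ S : Finset (Fin n), S.card ≤ n := by
    intro S; simpa using Finset.card_le_univ S
  -- Step 1: per-player decomposition
  have hb : ∀ i : Fin n, biasD n v P i =
      (∑ S ∈ univ.filter (fun S : Finset (Fin n) => i ∈ S),
        (pw n S.card - pw n (S.card - 1)) * v S)
      - ∑ T ∈ univ.filter (fun T : Finset (Fin n) => i ∉ T),
        (pw n (T.card + 1) - pw n T.card) * v T := by
    intro i
    unfold biasD gainD lossD
    have hloss : ∑ T ∈ univ.filter (fun T : Finset (Fin n) => i ∉ T),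
        P T * (v (insert i T) - v T)
        = ∑ S ∈ univ.filter (fun S : Finset (Fin n) => i ∈ S),
          pw n (S.card - 1) * (v S - v (S.erase i)) := by
      rw [← ins_bij n i (fun S => pw n (S.card - 1) * (v S - v (S.erase i)))]
      apply Finset.sum_congr rfl
      intro T hT
      simp only [mem_filter, mem_univ, true_and] at hT
      rw [hPp, Finset.card_insert_of_notMem hT, Finset.erase_insert hT,
        Nat.add_sub_cancel]
    have herase : ∑ S ∈ univ.filter (fun S : Finset (Fin n) => i ∈ S),
        (pw n S.card - pw n (S.card - 1)) * v (S.erase i)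
        = ∑ T ∈ univ.filter (fun T : Finset (Fin n) => i ∉ T),
          (pw n (T.card + 1) - pw n T.card) * v T := by
      rw [← ins_bij n i (fun S => (pw n S.card - pw n (S.card - 1)) * v (S.erase i))]
      apply Finset.sum_congr rfl
      intro T hT
      simp only [mem_filter, mem_univ, true_and] at hT
      rw [Finset.card_insert_of_notMem hT, Finset.erase_insert hT, Nat.add_sub_cancel]
    rw [hloss, ← herase, ← Finset.sum_sub_distrib, ← Finset.sum_sub_distrib]
    apply Finset.sum_congr rfl
    intro S hS
    rw [hPp]
    ring
  -- Step 2: global reindexing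
  have key : ∑ i : Fin n, biasD n v P i
      = ∑ S : Finset (Fin n),
          ((S.card : ℝ) * (pw n S.card - pw n (S.card - 1))
            - ((n - S.card : ℕ) : ℝ) * (pw n (S.card + 1) - pw n S.card)) * v S := by
    simp_rw [hb]
    rw [Finset.sum_sub_distrib,
      swap_sum n (fun i S => (pw n S.card - pw n (S.card - 1)) * v S),
      swap_sum' n (fun i T => (pw n (T.card + 1) - pw n T.card) * v T),
      ← Finset.sum_sub_distrib]
    apply Finset.sum_congr rfl
    intro S hS
    rw [Finset.sum_const, Finset.sum_const, Finset.card_compl, Fintype.card_fin,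
      nsmul_eq_mul, nsmul_eq_mul]
    ring
  -- Step 3: evaluate the coefficient
  have key2 : ∑ i : Fin n, biasD n v P i
      = v univ - 2 * ∑ S : Finset (Fin n), pw n S.card * v S := by
    rw [key]
    have hcoef : ∀ S ∈ (univ : Finset (Finset (Fin n))),
        ((S.card : ℝ) * (pw n S.card - pw n (S.card - 1))
          - ((n - S.card : ℕ) : ℝ) * (pw n (S.card + 1) - pw n S.card)) * v S
        = ((if S = univ then (1:ℝ) else 0) - 2 * pw n S.card) * v S := by
      intro S _
      by_cases hSe : S = (∅ : Finset (Fin n))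
      · subst hSe; simp [hv0]
      by_cases hSu : S = (univ : Finset (Fin n))
      · subst hSu
        have hc : (univ : Finset (Fin n)).card = n := by simp
        rw [if_pos rfl, hc, show n - n = 0 by omega]
        push_cast
        have := coeff_top n hn
        linear_combination (v univ) * this
      · have hk1 : 1 ≤ S.card := Finset.card_pos.mpr (Finset.nonempty_of_ne_empty hSe)
        have hk2 : S.card < n := by
          have := Finset.card_lt_card (Finset.ssubset_univ_iff.mpr hSu)
          simpa using this
        rw [if_neg hSu]
        have := coeff_mid n S.card hk1 hk2
        linear_combination (v S) * this
    rw [Finset.sum_congr rfl hcoef]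
    simp only [sub_mul, ite_mul, one_mul, zero_mul]
    rw [Finset.sum_sub_distrib, Finset.sum_ite_eq' univ univ v]
    simp only [mem_univ, if_pos]
    congr 1
    rw [Finset.mul_sum]
    apply Finset.sum_congr rfl
    intro S _; ring
  -- Step 4: the inequality
  rw [key2]
  have hsym : ∀ S : Finset (Fin n), pw n Sᶜ.card = pw n S.card := by
    intro S
    rw [Finset.card_compl, Fintype.card_fin]
    unfold pw
    have hc := hcard S
    rw [show n - (n - S.card) = S.card by omega]
    ring_nf
  have h1 : ∑ S : Finset (Fin n), pw n S.card * v S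
      = ∑ S : Finset (Fin n), pw n S.card * v Sᶜ := by
    rw [compl_reindex n (fun S => pw n S.card * v S)]
    apply Finset.sum_congr rfl
    intro S _
    rw [hsym]
  have h2 : 2 * ∑ S : Finset (Fin n), pw n S.card * v S ≤ v univ := by
    have : 2 * ∑ S : Finset (Fin n), pw n S.card * v S
        = ∑ S : Finset (Fin n), pw n S.card * (v S + v Sᶜ) := by
      rw [two_mul]
      nth_rewrite 2 [h1]
      rw [← Finset.sum_add_distrib]
      apply Finset.sum_congr rfl
      intro S _; ring
    rw [this]
    calc ∑ S : Finset (Fin n), pw n S.card * (v S + v Sᶜ)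
        ≤ ∑ S : Finset (Fin n), pw n S.card * v univ := by
          apply Finset.sum_le_sum
          intro S _
          apply mul_le_mul_of_nonneg_left _ (pw_nonneg n S.card)
          have := hsuper S Sᶜ disjoint_compl_right
          rwa [Finset.union_compl] at this
      _ = v univ := by rw [← Finset.sum_mul, psum, one_mul]
  linarith
end
end

section
/- Let n ≥ 1, η ∈ (0,1), and let P : Finset (Fin n) → ℝ be the binomial prior P T = η^{|T|}·(1−η)^{n−|T|}. Then for every payoff function v : Finset (Fin n) → ℝ and every i: (a) κ_i[v;P] = (2η−1)·ψ_i[v;P]; and (b) the unbiased D-value with bias ratio α = 2η−1, namely ψ̃_i[v;P] = (1−α)·γ_i[v;P] + (1+α)·λ_i[v;P], satisfies ψ̃_i[v;P] = 4(1−η)·γ_i[v;P] = 4η·λ_i[v;P] = 4η(1−η)·ψ_i[v;P] = 4·∑_{T ⊆ Fin n, i ∈ T} η^{|T|}·(1−η)^{n−|T|+1}·(v T − v (T \ {i})). -/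
open Finset

noncomputable section

/-- The unbiased D-value with bias ratio α. -/
def unbD (n : ℕ) (v P : Finset (Fin n) → ℝ) (α : ℝ) (i : Fin n) : ℝ :=
  (1 - α) * gainD n v P i + (1 + α) * lossD n v P i

theorem stmt_14 (n : ℕ) (hn : 1 ≤ n) (η : ℝ) (hη : η ∈ Set.Ioo (0 : ℝ) 1)
    (P : Finset (Fin n) → ℝ)
    (hP : ∀ T : Finset (Fin n), P T = η ^ T.card * (1 - η) ^ (n - T.card))
    (v : Finset (Fin n) → ℝ) (i : Fin n) :
    biasD n v P i = (2 * η - 1) * dVal n v P i ∧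
    unbD n v P (2 * η - 1) i = 4 * (1 - η) * gainD n v P i ∧
    unbD n v P (2 * η - 1) i = 4 * η * lossD n v P i ∧
    unbD n v P (2 * η - 1) i = 4 * η * (1 - η) * dVal n v P i ∧
    unbD n v P (2 * η - 1) i
      = 4 * ∑ T ∈ univ.filter (fun T : Finset (Fin n) => i ∈ T),
          η ^ T.card * (1 - η) ^ (n - T.card + 1) * (v T - v (T.erase i)) := by
  obtain ⟨hη0, hη1⟩ := hη
  have key : η * lossD n v P i = (1 - η) * gainD n v P i := by
    unfold lossD gainD
    rw [Finset.mul_sum, Finset.mul_sum]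
    refine Finset.sum_bij' (fun T _ => insert i T) (fun T _ => T.erase i) ?_ ?_ ?_ ?_ ?_
    · intro T hT; simp
    · intro T hT; simp
    · intro T hT
      simp only [Finset.mem_filter, Finset.mem_univ, true_and] at hT
      exact Finset.erase_insert hT
    · intro T hT
      simp only [Finset.mem_filter, Finset.mem_univ, true_and] at hT
      exact Finset.insert_erase hT
    · intro T hT
      simp only [Finset.mem_filter, Finset.mem_univ, true_and] at hT
      rw [Finset.erase_insert hT, hP T, hP (insert i T),
        Finset.card_insert_of_notMem hT]
      have hne : T ≠ Finset.univ := fun h => hT (by rw [h]; exact Finset.mem_univ i)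
      have hlt : T.card < n := by
        simpa using Finset.card_lt_card (Finset.ssubset_univ_iff.mpr hne)
      have h1 : n - T.card = (n - (T.card + 1)) + 1 := by omega
      rw [h1]
      ring
  have hγ : gainD n v P i = η * (gainD n v P i + lossD n v P i) := by
    nlinarith [key]
  have hlam : lossD n v P i = (1 - η) * (gainD n v P i + lossD n v P i) := by
    nlinarith [key]
  have hsum : 4 * ∑ T ∈ univ.filter (fun T : Finset (Fin n) => i ∈ T),
      η ^ T.card * (1 - η) ^ (n - T.card + 1) * (v T - v (T.erase i))
      = 4 * (1 - η) * gainD n v P i := by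
    unfold gainD
    rw [Finset.mul_sum, Finset.mul_sum]
    apply Finset.sum_congr rfl
    intro T hT
    rw [hP T, pow_succ]
    ring
  refine ⟨?_, ?_, ?_, ?_, ?_⟩
  · unfold biasD dVal
    nlinarith [key]
  · unfold unbD
    nlinarith [key]
  · unfold unbD
    nlinarith [key]
  · unfold unbD dVal
    nlinarith [key]
  · unfold unbD
    rw [hsum]
    nlinarith [key]
end
end

section
/- Let n ≥ 1. For every i ∈ Fin n, the weights on the marginal gains in the unbiased Shapley value sum to 2/3, i.e., ∑_{T ⊆ Fin n, i ∈ T} 4·(|T|)!·(n−|T|+1)!/(n+2)! = 2/3. -/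
open Finset

noncomputable section

/-- The unbiased Shapley value Ψ̃_i[v]. -/
def ushapley (n : ℕ) (v : Finset (Fin n) → ℝ) (i : Fin n) : ℝ :=
  4 * ∑ T ∈ univ.filter (fun T : Finset (Fin n) => i ∈ T),
    ((Nat.factorial T.card * Nat.factorial (n - T.card + 1) : ℝ)
        / (Nat.factorial (n + 2) : ℝ)) * (v T - v (T.erase i))


lemma gauss1 (n : ℕ) : 2 * ∑ k ∈ range n, (k+1) = n*(n+1) := by
  induction n with
  | zero => simp
  | succ m ih => rw [Finset.sum_range_succ, Nat.mul_add, ih]; ring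

lemma sum6 (n : ℕ) : 6 * ∑ k ∈ range n, (k+1)*(n-k) = n*(n+1)*(n+2) := by
  induction n with
  | zero => simp
  | succ n ih =>
    have h1 : ∑ k ∈ range (n+1), (k+1)*(n+1-k)
        = (∑ k ∈ range (n+1), (k+1)*(n-k)) + ∑ k ∈ range (n+1), (k+1) := by
      rw [← Finset.sum_add_distrib]
      refine Finset.sum_congr rfl fun k hk => ?_
      have hk' : k ≤ n := by simpa [Nat.lt_succ_iff] using hk
      have : n + 1 - k = (n - k) + 1 := by omega
      rw [this]; ring
    have h2 : ∑ k ∈ range (n+1), (k+1)*(n-k) = ∑ k ∈ range n, (k+1)*(n-k) := by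
      rw [Finset.sum_range_succ]; simp
    have h3 := gauss1 (n+1)
    rw [h1, h2, Nat.mul_add]
    nlinarith [ih, h3]

lemma sumnat (n : ℕ) (hn : 1 ≤ n) :
    6 * ∑ k ∈ range n, (n-1).choose k * ((k+1).factorial * (n-k).factorial)
      = (n+2).factorial := by
  have key : ∀ k ∈ range n, (n-1).choose k * ((k+1).factorial * (n-k).factorial)
      = (n-1).factorial * ((k+1)*(n-k)) := by
    intro k hk
    have hk' : k < n := Finset.mem_range.1 hk
    have hle : k ≤ n - 1 := by omega
    have hc := Nat.choose_mul_factorial_mul_factorial hle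
    have h1 : (k+1).factorial = (k+1) * k.factorial := rfl
    have h2 : (n-k).factorial = (n-k) * (n-1-k).factorial := by
      have e : n - k = (n-1-k)+1 := by omega
      rw [e, Nat.factorial_succ]
    calc (n-1).choose k * ((k+1).factorial * (n-k).factorial)
        = ((n-1).choose k * k.factorial * (n-1-k).factorial) * ((k+1)*(n-k)) := by
          rw [h1, h2]; ring
      _ = (n-1).factorial * ((k+1)*(n-k)) := by rw [hc]
  have hnf : n.factorial = n * (n-1).factorial := by
    conv_lhs => rw [show n = (n-1)+1 by omega]
    rw [Nat.factorial_succ, show n-1+1 = n by omega]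
  have hfac : (n+2).factorial = (n-1).factorial * (n*(n+1)*(n+2)) := by
    rw [show n+2 = (n+1)+1 from rfl, Nat.factorial_succ, Nat.factorial_succ, hnf]; ring
  rw [Finset.sum_congr rfl key, ← Finset.mul_sum]
  calc 6 * ((n-1).factorial * ∑ k ∈ range n, (k+1)*(n-k))
      = (n-1).factorial * (6 * ∑ k ∈ range n, (k+1)*(n-k)) := by ring
    _ = (n-1).factorial * (n*(n+1)*(n+2)) := by rw [sum6]
    _ = (n+2).factorial := hfac.symm

theorem stmt_15 (n : ℕ) (hn : 1 ≤ n) (i : Fin n) :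
    ∑ T ∈ univ.filter (fun T : Finset (Fin n) => i ∈ T),
      4 * (Nat.factorial T.card * Nat.factorial (n - T.card + 1) : ℝ)
          / (Nat.factorial (n + 2) : ℝ)
      = 2 / 3 := by
  have hre : ∑ T ∈ univ.filter (fun T : Finset (Fin n) => i ∈ T),
      4 * (Nat.factorial T.card * Nat.factorial (n - T.card + 1) : ℝ)
          / (Nat.factorial (n + 2) : ℝ)
      = ∑ S ∈ ((univ : Finset (Fin n)).erase i).powerset,
          4 * (Nat.factorial (S.card + 1) * Nat.factorial (n - (S.card + 1) + 1) : ℝ)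
          / (Nat.factorial (n + 2) : ℝ) := by
    refine Finset.sum_bij' (fun T _ => T.erase i) (fun S _ => insert i S) ?_ ?_ ?_ ?_ ?_
    · intro T hT
      simp only [Finset.mem_powerset]
      exact Finset.erase_subset_erase i (Finset.subset_univ T)
    · intro S hS
      simp only [Finset.mem_filter, Finset.mem_univ, true_and]
      exact Finset.mem_insert_self i S
    · intro T hT
      simp only [Finset.mem_filter, Finset.mem_univ, true_and] at hT
      exact Finset.insert_erase hT
    · intro S hS
      simp only [Finset.mem_powerset] at hS
      have : i ∉ S := fun h => (Finset.mem_erase.1 (hS h)).1 rfl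
      exact Finset.erase_insert this
    · intro T hT
      simp only [Finset.mem_filter, Finset.mem_univ, true_and] at hT
      have : (T.erase i).card + 1 = T.card := by
        rw [Finset.card_erase_of_mem hT]
        have : 1 ≤ T.card := Finset.card_pos.2 ⟨i, hT⟩
        omega
      rw [this]
  rw [hre, Finset.sum_powerset_apply_card
    (fun m => 4 * (Nat.factorial (m + 1) * Nat.factorial (n - (m + 1) + 1) : ℝ)
          / (Nat.factorial (n + 2) : ℝ))]
  have hcard : ((univ : Finset (Fin n)).erase i).card = n - 1 := by
    rw [Finset.card_erase_of_mem (Finset.mem_univ i), Finset.card_univ, Fintype.card_fin]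
  rw [hcard, show n - 1 + 1 = n by omega]
  have hstep : ∀ k ∈ range n,
      (n-1).choose k • (4 * (Nat.factorial (k + 1) * Nat.factorial (n - (k + 1) + 1) : ℝ)
          / (Nat.factorial (n + 2) : ℝ))
      = (((n-1).choose k * ((k+1).factorial * (n-k).factorial) : ℕ) : ℝ) * 4
          / (Nat.factorial (n + 2) : ℝ) := by
    intro k hk
    have hk' : k < n := Finset.mem_range.1 hk
    rw [show n - (k+1) + 1 = n - k by omega]
    push_cast
    rw [nsmul_eq_mul]
    ring
  rw [Finset.sum_congr rfl hstep, ← Finset.sum_div, ← Finset.sum_mul, ← Nat.cast_sum]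
  have hs := sumnat n hn
  have hsR : ((∑ k ∈ range n, (n-1).choose k * ((k+1).factorial * (n-k).factorial) : ℕ) : ℝ) * 6
      = ((n+2).factorial : ℝ) := by exact_mod_cast by rw [Nat.mul_comm] at hs; exact hs
  have hpos : ((n+2).factorial : ℝ) ≠ 0 := by
    exact_mod_cast Nat.factorial_ne_zero (n+2)
  rw [div_eq_div_iff hpos (by norm_num : (3:ℝ) ≠ 0)]
  linarith [hsR]
end
end

section
/- Let n ≥ 1 and let v : Finset (Fin n) → ℝ be a payoff function. Then the unbiased Shapley values sum to ∑_{i} Ψ̃_i[v] = ∑_{T ⊆ Fin n, |T| > n/2} (4·(|T|)!·(n−|T|)!·(2|T|−n)/(n+2)!) · (v T − v (univ \ T)), where univ is the full set Fin n. -/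
open Finset

noncomputable section

private lemma fact_key (n s : ℕ) (hs : s ≤ n) :
    (s : ℝ) * (4 * ((Nat.factorial s * Nat.factorial (n - s + 1) : ℝ)
        / (Nat.factorial (n + 2) : ℝ)))
      - ((n : ℝ) - s) * (4 * ((Nat.factorial (s + 1) * Nat.factorial (n - (s + 1) + 1) : ℝ)
        / (Nat.factorial (n + 2) : ℝ)))
    = 4 * (Nat.factorial s * Nat.factorial (n - s) * (2 * s - n) : ℝ)
        / (Nat.factorial (n + 2) : ℝ) := by
  rcases eq_or_lt_of_le hs with rfl | h
  · simp [Nat.sub_self]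
    ring
  · obtain ⟨k, hk⟩ : ∃ k, n = s + (k + 1) := ⟨n - s - 1, by omega⟩
    subst hk
    have h1 : s + (k+1) - s + 1 = k + 2 := by omega
    have h2 : s + (k+1) - (s+1) + 1 = k + 1 := by omega
    have h3 : s + (k+1) - s = k + 1 := by omega
    rw [h1, h2, h3]
    have hF : ((s + (k+1) + 2).factorial : ℝ) ≠ 0 := by
      exact_mod_cast Nat.factorial_ne_zero _
    field_simp
    push_cast [Nat.factorial_succ]
    ring

/-- The coefficient appearing on the right-hand side. -/
private def gcoef (n : ℕ) (S : Finset (Fin n)) : ℝ :=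
  4 * (Nat.factorial S.card * Nat.factorial (n - S.card) * (2 * S.card - n) : ℝ)
    / (Nat.factorial (n + 2) : ℝ)

private lemma card_le (n : ℕ) (S : Finset (Fin n)) : S.card ≤ n := by
  simpa using Finset.card_le_univ S

private lemma card_compl' (n : ℕ) (S : Finset (Fin n)) : (univ \ S).card = n - S.card := by
  rw [Finset.card_sdiff_of_subset (Finset.subset_univ S)]; simp

private lemma compl_compl' (n : ℕ) (S : Finset (Fin n)) : univ \ (univ \ S) = S := by
  rw [Finset.sdiff_sdiff_self_left, Finset.univ_inter]

private lemma gcoef_compl (n : ℕ) (S : Finset (Fin n)) :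
    gcoef n (univ \ S) = - gcoef n S := by
  unfold gcoef
  rw [card_compl' n S, Nat.sub_sub_self (card_le n S), Nat.cast_sub (card_le n S)]
  ring

private lemma ushapley_eq (n : ℕ) (v : Finset (Fin n) → ℝ) (i : Fin n)
    (c : ℕ → ℝ) (hc : ∀ t, c t = (Nat.factorial t * Nat.factorial (n - t + 1) : ℝ)
        / (Nat.factorial (n + 2) : ℝ)) :
    ushapley n v i
      = (∑ S : Finset (Fin n), (if i ∈ S then (4 * c S.card) * v S else 0))
        - (∑ S : Finset (Fin n), (if i ∈ S then 0 else (4 * c (S.card + 1)) * v S)) := by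
  classical
  unfold ushapley
  rw [Finset.mul_sum]
  have key : ∀ T ∈ univ.filter (fun T : Finset (Fin n) => i ∈ T),
      4 * (((Nat.factorial T.card * Nat.factorial (n - T.card + 1) : ℝ)
        / (Nat.factorial (n + 2) : ℝ)) * (v T - v (T.erase i)))
      = (4 * c T.card) * v T - (4 * c ((T.erase i).card + 1)) * v (T.erase i) := by
    intro T hT
    rw [Finset.mem_filter] at hT
    rw [Finset.card_erase_add_one hT.2, hc]
    ring
  rw [Finset.sum_congr rfl key, Finset.sum_sub_distrib]
  congr 1
  · rw [Finset.sum_filter]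
  · have : (∑ S : Finset (Fin n), if i ∈ S then 0 else (4 * c (S.card + 1)) * v S)
        = ∑ S ∈ univ.filter (fun S : Finset (Fin n) => i ∉ S), (4 * c (S.card + 1)) * v S := by
      rw [Finset.sum_filter]
      exact Finset.sum_congr rfl (fun S _ => by by_cases h : i ∈ S <;> simp [h])
    rw [this]
    refine Finset.sum_bij' (fun T _ => T.erase i) (fun S _ => insert i S) ?_ ?_ ?_ ?_ ?_
    · intro T hT; simp
    · intro S hS; simp
    · intro T hT; simp only [Finset.mem_filter, Finset.mem_univ, true_and] at hT
      exact Finset.insert_erase hT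
    · intro S hS; simp only [Finset.mem_filter, Finset.mem_univ, true_and] at hS
      exact Finset.erase_insert hS
    · intro T hT; rfl

theorem stmt_16 (n : ℕ) (hn : 1 ≤ n) (v : Finset (Fin n) → ℝ) :
    ∑ i : Fin n, ushapley n v i
      = ∑ T ∈ univ.filter (fun T : Finset (Fin n) => n < 2 * T.card),
          (4 * (Nat.factorial T.card * Nat.factorial (n - T.card)
                  * (2 * T.card - n) : ℝ) / (Nat.factorial (n + 2) : ℝ))
            * (v T - v (univ \ T)) := by
  classical
  set c : ℕ → ℝ := fun t => (Nat.factorial t * Nat.factorial (n - t + 1) : ℝ)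
      / (Nat.factorial (n + 2) : ℝ) with hc
  -- Left-hand side equals the full sum with coefficients `gcoef`.
  have hLHS : ∑ i : Fin n, ushapley n v i = ∑ S : Finset (Fin n), gcoef n S * v S := by
    calc ∑ i : Fin n, ushapley n v i
        = ∑ i : Fin n, ((∑ S : Finset (Fin n), if i ∈ S then (4 * c S.card) * v S else 0)
            - ∑ S : Finset (Fin n), if i ∈ S then 0 else (4 * c (S.card + 1)) * v S) :=
          Finset.sum_congr rfl (fun i _ => ushapley_eq n v i c (fun t => rfl))
      _ = ∑ S : Finset (Fin n), ∑ i : Fin n, ((if i ∈ S then (4 * c S.card) * v S else 0)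
            - (if i ∈ S then 0 else (4 * c (S.card + 1)) * v S)) := by
          rw [← Finset.sum_comm]
          exact Finset.sum_congr rfl (fun i _ => (Finset.sum_sub_distrib _ _).symm)
      _ = ∑ S : Finset (Fin n), gcoef n S * v S := by
          refine Finset.sum_congr rfl (fun S _ => ?_)
          rw [Finset.sum_sub_distrib]
          have h1 : ∑ i : Fin n, (if i ∈ S then (4 * c S.card) * v S else 0)
              = (S.card : ℝ) * ((4 * c S.card) * v S) := by
            rw [Finset.sum_ite_mem, Finset.univ_inter, Finset.sum_const, nsmul_eq_mul]
          have h2 : ∑ i : Fin n, (if i ∈ S then 0 else (4 * c (S.card + 1)) * v S)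
              = ((n : ℝ) - S.card) * ((4 * c (S.card + 1)) * v S) := by
            have step : ∀ i : Fin n, (if i ∈ S then 0 else (4 * c (S.card + 1)) * v S)
                = (4 * c (S.card + 1)) * v S
                  - (if i ∈ S then (4 * c (S.card + 1)) * v S else 0) := by
              intro i; by_cases h : i ∈ S <;> simp [h]
            rw [Finset.sum_congr rfl (fun i _ => step i), Finset.sum_sub_distrib,
              Finset.sum_const, Finset.sum_ite_mem, Finset.univ_inter, Finset.sum_const,
              nsmul_eq_mul, nsmul_eq_mul, Finset.card_univ, Fintype.card_fin]
            ring
          rw [h1, h2]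
          have hk := fact_key n S.card (card_le n S)
          simp only [hc]
          unfold gcoef
          linear_combination hk * v S
  -- Right-hand side also equals the full sum.
  have hRHS : (∑ T ∈ univ.filter (fun T : Finset (Fin n) => n < 2 * T.card),
          (4 * (Nat.factorial T.card * Nat.factorial (n - T.card)
                  * (2 * T.card - n) : ℝ) / (Nat.factorial (n + 2) : ℝ))
            * (v T - v (univ \ T)))
      = ∑ S : Finset (Fin n), gcoef n S * v S := by
    have e1 : (∑ T ∈ univ.filter (fun T : Finset (Fin n) => n < 2 * T.card),
          (4 * (Nat.factorial T.card * Nat.factorial (n - T.card)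
                  * (2 * T.card - n) : ℝ) / (Nat.factorial (n + 2) : ℝ))
            * (v T - v (univ \ T)))
        = (∑ T ∈ univ.filter (fun T : Finset (Fin n) => n < 2 * T.card), gcoef n T * v T)
          - ∑ T ∈ univ.filter (fun T : Finset (Fin n) => n < 2 * T.card),
              gcoef n T * v (univ \ T) := by
      rw [← Finset.sum_sub_distrib]
      exact Finset.sum_congr rfl (fun T _ => by unfold gcoef; ring)
    have e2 : (∑ T ∈ univ.filter (fun T : Finset (Fin n) => n < 2 * T.card),
            gcoef n T * v (univ \ T))
        = ∑ S ∈ univ.filter (fun S : Finset (Fin n) => 2 * S.card < n),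
            gcoef n (univ \ S) * v S := by
      refine Finset.sum_bij' (fun T _ => univ \ T) (fun S _ => univ \ S) ?_ ?_ ?_ ?_ ?_
      · intro T hT
        simp only [Finset.mem_filter, Finset.mem_univ, true_and] at hT ⊢
        have := card_le n T
        rw [card_compl' n T]; omega
      · intro S hS
        simp only [Finset.mem_filter, Finset.mem_univ, true_and] at hS ⊢
        have := card_le n S
        rw [card_compl' n S]; omega
      · intro T hT; exact compl_compl' n T
      · intro S hS; exact compl_compl' n S
      · intro T hT; rw [compl_compl' n T]
    have e3 : (∑ S ∈ univ.filter (fun S : Finset (Fin n) => 2 * S.card < n),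
            gcoef n (univ \ S) * v S)
        = - ∑ S ∈ univ.filter (fun S : Finset (Fin n) => 2 * S.card < n),
            gcoef n S * v S := by
      rw [← Finset.sum_neg_distrib]
      exact Finset.sum_congr rfl (fun S _ => by rw [gcoef_compl]; ring)
    have e4 : (∑ S ∈ univ.filter (fun S : Finset (Fin n) => 2 * S.card < n),
            gcoef n S * v S)
        = ∑ S ∈ univ.filter (fun S : Finset (Fin n) => ¬ n < 2 * S.card),
            gcoef n S * v S := by
      refine Finset.sum_subset ?_ ?_
      · intro S hS
        simp only [Finset.mem_filter, Finset.mem_univ, true_and] at hS ⊢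
        omega
      · intro S hS hS'
        simp only [Finset.mem_filter, Finset.mem_univ, true_and] at hS hS'
        have hcard : 2 * S.card = n := by omega
        have hz : ((2 : ℝ) * S.card - n) = 0 := by
          have hn' : (n : ℝ) = 2 * (S.card : ℝ) := by exact_mod_cast hcard.symm
          rw [hn']; ring
        unfold gcoef
        rw [hz]
        ring
    rw [e1, e2, e3, e4, sub_neg_eq_add,
      Finset.sum_filter_add_sum_filter_not univ (fun S : Finset (Fin n) => n < 2 * S.card)]
  rw [hLHS, hRHS]
end
end

section
/- Let n ≥ 1, let P : Finset (Fin n) → ℝ be a probability mass function, and let v : Finset (Fin n) → ℝ be a payoff function. For a permutation σ of Fin n and i ∈ Fin n, let Ξ_i^σ denote the set of elements of Fin n that precede i in the ordering σ (i.e., Ξ_i^σ = {j : σ⁻¹ j < σ⁻¹ i}). Then, averaging uniformly over all n! permutations σ: (a) ψ_i[v;P] = (1/n!)·∑_σ ((P(Ξ_i^σ) + P(Ξ_i^σ ∪ {i}))·n!/((|Ξ_i^σ|)!·(n−|Ξ_i^σ|−1)!)) · (v(Ξ_i^σ ∪ {i}) − v(Ξ_i^σ)); (b) γ_i[v;P]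 = (1/n!)·∑_σ (n!·P(Ξ_i^σ ∪ {i})/((|Ξ_i^σ|)!·(n−|Ξ_i^σ|−1)!)) · (v(Ξ_i^σ ∪ {i}) − v(Ξ_i^σ)); and (c) λ_i[v;P] = (1/n!)·∑_σ (n!·P(Ξ_i^σ)/((|Ξ_i^σ|)!·(n−|Ξ_i^σ|−1)!)) · (v(Ξ_i^σ ∪ {i}) − v(Ξ_i^σ)). -/
open Finset

noncomputable section

/-- The set Ξ_i^σ of players preceding i in the ordering σ. -/
def xiSet (n : ℕ) (σ : Equiv.Perm (Fin n)) (i : Fin n) : Finset (Fin n) :=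
  univ.filter (fun j => σ.symm j < σ.symm i)

lemma mem_xiSet {n : ℕ} {σ : Equiv.Perm (Fin n)} {i j : Fin n} :
    j ∈ xiSet n σ i ↔ σ.symm j < σ.symm i := by
  simp [xiSet]

lemma card_fiber (n : ℕ) (i : Fin n) (S : Finset (Fin n)) (hiS : i ∉ S) :
    (univ.filter fun σ : Equiv.Perm (Fin n) => xiSet n σ i = S).card
      = (S.card).factorial * (n - S.card - 1).factorial := by
  classical
  set k := S.card with hk
  have hk1 : k + 1 ≤ n := by
    have h := card_le_univ (insert i S)
    rw [card_insert_of_notMem hiS] at h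
    simpa using h
  set m := n - k - 1 with hm
  have heq : k + (1 + m) = n := by omega
  set T : Finset (Fin n) := (insert i S)ᶜ with hT
  have hTcard : T.card = m := by
    rw [hT, card_compl, card_insert_of_notMem hiS, Fintype.card_fin]; omega
  have hiT : i ∉ T := by simp [hT]
  have hST : ∀ x : Fin n, x ∈ T → x ∉ S := by
    intro x hx; simp [hT, Finset.mem_compl] at hx; exact hx.2
  -- the position equivalence
  set E : Fin n ≃ (Fin k ⊕ (Fin 1 ⊕ Fin m)) :=
    (finCongr heq.symm).trans (finSumFinEquiv.symm.trans
      (Equiv.sumCongr (Equiv.refl (Fin k)) finSumFinEquiv.symm)) with hE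
  have hEl : ∀ p : Fin k, ((E.symm (Sum.inl p) : Fin n) : ℕ) = p := by
    intro p; simp [hE]
  have hEm : ∀ z : Fin 1, ((E.symm (Sum.inr (Sum.inl z)) : Fin n) : ℕ) = k := by
    intro z; simp [hE]
  have hEr : ∀ q : Fin m, ((E.symm (Sum.inr (Sum.inr q)) : Fin n) : ℕ) = k + 1 + q := by
    intro q; simp [hE]; ring
  -- the permutation built from two equivalences
  set g : ((Fin k ≃ {x // x ∈ S}) × (Fin m ≃ {x // x ∈ T})) → (Fin n → Fin n) :=
    fun ab x => Sum.elim (fun p => ((ab.1 p : Fin n)))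
      (Sum.elim (fun _ => i) (fun q => ((ab.2 q : Fin n)))) (E x) with hg
  have hgS : ∀ ab p, g ab (E.symm (Sum.inl p)) = (ab.1 p : Fin n) := by
    intro ab p; simp [hg]
  have hgi : ∀ ab z, g ab (E.symm (Sum.inr (Sum.inl z))) = i := by
    intro ab z; simp [hg]
  have hgT : ∀ ab q, g ab (E.symm (Sum.inr (Sum.inr q))) = (ab.2 q : Fin n) := by
    intro ab q; simp [hg]
  have hginj : ∀ ab, Function.Injective (g ab) := by
    intro ab x y hxy
    simp only [hg] at hxy
    apply E.injective
    rcases hEx : E x with p | z | q <;> rcases hEy : E y with p' | z' | q' <;>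
        rw [hEx, hEy] at hxy <;>
        simp only [Sum.elim_inl, Sum.elim_inr] at hxy
    · exact congrArg Sum.inl (ab.1.injective (Subtype.ext hxy))
    · exact absurd (hxy ▸ (ab.1 p).2) hiS
    · exact absurd (hxy ▸ (ab.1 p).2) (hST _ (ab.2 q').2)
    · exact absurd (hxy.symm ▸ (ab.1 p').2) hiS
    · exact congrArg Sum.inr (congrArg Sum.inl (Subsingleton.elim z z'))
    · exact absurd (hxy.symm ▸ (ab.2 q').2) hiT
    · exact absurd (hxy.symm ▸ (ab.1 p').2) (hST _ (ab.2 q).2)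
    · exact absurd (hxy ▸ (ab.2 q).2) hiT
    · exact congrArg Sum.inr (congrArg Sum.inr (ab.2.injective (Subtype.ext hxy)))
  set Ψ : ((Fin k ≃ {x // x ∈ S}) × (Fin m ≃ {x // x ∈ T})) → Equiv.Perm (Fin n) :=
    fun ab => Equiv.ofBijective (g ab) (Finite.injective_iff_bijective.mp (hginj ab)) with hΨ
  have hΨapp : ∀ ab x, Ψ ab x = g ab x := fun ab x => rfl
  have hΨsymm_i : ∀ ab, (Ψ ab).symm i = E.symm (Sum.inr (Sum.inl 0)) := by
    intro ab
    rw [Equiv.symm_apply_eq, hΨapp, hgi]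
  have hΨxi : ∀ ab, xiSet n (Ψ ab) i = S := by
    intro ab
    ext j
    rw [mem_xiSet, hΨsymm_i]
    constructor
    · intro hj
      by_contra hjS
      rcases hEj : E ((Ψ ab).symm j) with p | z | q
      · -- then j ∈ S, contradiction
        have : (Ψ ab).symm j = E.symm (Sum.inl p) := by rw [← hEj, E.symm_apply_apply]
        have hj' : j = (ab.1 p : Fin n) := by
          conv_lhs => rw [← (Ψ ab).apply_symm_apply j]
          rw [this, hΨapp, hgS]
        exact hjS (hj' ▸ (ab.1 p).2)
      · have : (Ψ ab).symm j = E.symm (Sum.inr (Sum.inl z)) := by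
          rw [← hEj, E.symm_apply_apply]
        rw [this] at hj
        exact absurd (Fin.lt_def.mp hj) (by rw [hEm, hEm]; omega)
      · have hthis : (Ψ ab).symm j = E.symm (Sum.inr (Sum.inr q)) := by
          rw [← hEj, E.symm_apply_apply]
        rw [hthis] at hj
        exact absurd (Fin.lt_def.mp hj) (by rw [hEr, hEm]; omega)
    · intro hj
      have : (Ψ ab).symm j = E.symm (Sum.inl (ab.1.symm ⟨j, hj⟩)) := by
        rw [Equiv.symm_apply_eq, hΨapp, hgS, Equiv.apply_symm_apply]
      rw [this, Fin.lt_def, hEl, hEm]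
      exact (ab.1.symm ⟨j, hj⟩).isLt
  have hΨinj : Function.Injective Ψ := by
    intro ab ab' h
    have h1 : ab.1 = ab'.1 := by
      apply Equiv.ext; intro p
      apply Subtype.ext
      have := congrArg (fun σ : Equiv.Perm (Fin n) => σ (E.symm (Sum.inl p))) h
      simpa [hΨapp, hgS] using this
    have h2 : ab.2 = ab'.2 := by
      apply Equiv.ext; intro q
      apply Subtype.ext
      have := congrArg (fun σ : Equiv.Perm (Fin n) => σ (E.symm (Sum.inr (Sum.inr q)))) h
      simpa [hΨapp, hgT] using this
    exact Prod.ext h1 h2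
  -- surjectivity onto the fiber
  have hsurj : ∀ σ : Equiv.Perm (Fin n), xiSet n σ i = S → ∃ ab, Ψ ab = σ := by
    intro σ hσ
    have hmem : ∀ j, j ∈ S ↔ σ.symm j < σ.symm i := by
      intro j; rw [← hσ, mem_xiSet]
    have hsi : ((σ.symm i : Fin n) : ℕ) = k := by
      have h1 : Finset.image (fun j => σ.symm j) S = Finset.Iio (σ.symm i) := by
        ext p
        simp only [Finset.mem_image, Finset.mem_Iio]
        constructor
        · rintro ⟨j, hj, rfl⟩; exact (hmem j).mp hj
        · intro hp; exact ⟨σ p, (hmem (σ p)).mpr (by simpa using hp), by simp⟩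
      have h2 := congrArg Finset.card h1
      rw [Finset.card_image_of_injective _ σ.symm.injective, Fin.card_Iio] at h2
      omega
    set fa : Fin k → {x // x ∈ S} := fun p =>
      ⟨σ (E.symm (Sum.inl p)), by
        rw [hmem, Fin.lt_def, Equiv.symm_apply_apply, hEl, hsi]; exact p.isLt⟩ with hfa
    have hfainj : Function.Injective fa := by
      intro p p' hpp'
      have h1 := σ.injective (congrArg Subtype.val hpp')
      exact Sum.inl_injective (E.symm.injective h1)
    have hfabij : Function.Bijective fa :=
      (Fintype.bijective_iff_injective_and_card fa).mpr ⟨hfainj, by simp [hk]⟩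
    set fb : Fin m → {x // x ∈ T} := fun q =>
      ⟨σ (E.symm (Sum.inr (Sum.inr q))), by
        rw [hT, Finset.mem_compl, Finset.mem_insert]
        push_neg
        constructor
        · intro hcon
          have : E.symm (Sum.inr (Sum.inr q)) = σ.symm i := by
            rw [← hcon, Equiv.symm_apply_apply]
          have := congrArg Fin.val this
          rw [hEr, hsi] at this
          omega
        · rw [hmem, Fin.lt_def, Equiv.symm_apply_apply, hEr, hsi]
          omega⟩ with hfb
    have hfbinj : Function.Injective fb := by
      intro q q' hqq'
      have h1 := σ.injective (congrArg Subtype.val hqq')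
      exact Sum.inr_injective (Sum.inr_injective (E.symm.injective h1))
    have hfbbij : Function.Bijective fb :=
      (Fintype.bijective_iff_injective_and_card fb).mpr ⟨hfbinj, by simp [hTcard]⟩
    refine ⟨(Equiv.ofBijective fa hfabij, Equiv.ofBijective fb hfbbij), ?_⟩
    apply Equiv.ext
    intro x
    rw [hΨapp]
    rcases hEx : E x with p | z | q
    · have hx : x = E.symm (Sum.inl p) := by rw [← hEx, E.symm_apply_apply]
      rw [hx, hgS]; rfl
    · have hx : x = E.symm (Sum.inr (Sum.inl z)) := by rw [← hEx, E.symm_apply_apply]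
      rw [hx, hgi]
      have h2 : E.symm (Sum.inr (Sum.inl z)) = σ.symm i := Fin.ext (by rw [hEm, hsi])
      rw [h2, Equiv.apply_symm_apply]
    · have hx : x = E.symm (Sum.inr (Sum.inr q)) := by rw [← hEx, E.symm_apply_apply]
      rw [hx, hgT]; rfl
  -- the equivalence with the fiber
  have hsurj' : Function.Surjective
      (fun ab : (Fin k ≃ {x // x ∈ S}) × (Fin m ≃ {x // x ∈ T}) =>
        (⟨Ψ ab, hΨxi ab⟩ : {σ : Equiv.Perm (Fin n) // xiSet n σ i = S})) := by
    rintro ⟨σ, hσ⟩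
    obtain ⟨ab, hab⟩ := hsurj σ hσ
    exact ⟨ab, Subtype.ext hab⟩
  have hinj' : Function.Injective
      (fun ab : (Fin k ≃ {x // x ∈ S}) × (Fin m ≃ {x // x ∈ T}) =>
        (⟨Ψ ab, hΨxi ab⟩ : {σ : Equiv.Perm (Fin n) // xiSet n σ i = S})) := by
    intro ab ab' h
    exact hΨinj (congrArg Subtype.val h)
  have Φ := Equiv.ofBijective _ ⟨hinj', hsurj'⟩
  have eS : Fin k ≃ {x // x ∈ S} := (Fintype.equivFinOfCardEq (by simp [hk])).symm
  have eT : Fin m ≃ {x // x ∈ T} := (Fintype.equivFinOfCardEq (by simp [hTcard])).symm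
  calc (univ.filter fun σ : Equiv.Perm (Fin n) => xiSet n σ i = S).card
      = Fintype.card {σ : Equiv.Perm (Fin n) // xiSet n σ i = S} :=
        (Fintype.card_subtype _).symm
    _ = Fintype.card ((Fin k ≃ {x // x ∈ S}) × (Fin m ≃ {x // x ∈ T})) :=
        (Fintype.card_congr Φ).symm
    _ = k.factorial * m.factorial := by
        rw [Fintype.card_prod, Fintype.card_equiv eS, Fintype.card_equiv eT,
          Fintype.card_fin, Fintype.card_fin]
    _ = (S.card).factorial * (n - S.card - 1).factorial := by rw [← hk, ← hm]

lemma sum_perm_eq (n : ℕ) (i : Fin n) (f : Finset (Fin n) → ℝ) :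
    ∑ σ : Equiv.Perm (Fin n), f (xiSet n σ i)
      = ∑ S ∈ univ.filter (fun S : Finset (Fin n) => i ∉ S),
          ((S.card).factorial * (n - S.card - 1).factorial : ℝ) * f S := by
  classical
  have h0 : ∀ σ : Equiv.Perm (Fin n), i ∉ xiSet n σ i := by
    intro σ; simp [mem_xiSet]
  calc ∑ σ : Equiv.Perm (Fin n), f (xiSet n σ i)
      = ∑ σ ∈ univ.filter (fun σ : Equiv.Perm (Fin n) =>
          xiSet n σ i ∈ univ.filter (fun S : Finset (Fin n) => i ∉ S)), f (xiSet n σ i) := by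
        rw [Finset.filter_true_of_mem]
        intro σ _; simp [h0 σ]
    _ = ∑ S ∈ univ.filter (fun S : Finset (Fin n) => i ∉ S),
          ∑ σ ∈ univ.filter (fun σ : Equiv.Perm (Fin n) => xiSet n σ i = S), f S :=
        (Finset.sum_fiberwise_eq_sum_filter' _ _ _ _).symm
    _ = ∑ S ∈ univ.filter (fun S : Finset (Fin n) => i ∉ S),
          ((S.card).factorial * (n - S.card - 1).factorial : ℝ) * f S := by
        refine Finset.sum_congr rfl fun S hS => ?_
        have hiS : i ∉ S := by simpa using (Finset.mem_filter.mp hS).2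
        rw [Finset.sum_const, card_fiber n i S hiS, nsmul_eq_mul, Nat.cast_mul]


lemma gainD_eq (n : ℕ) (v P : Finset (Fin n) → ℝ) (i : Fin n) :
    gainD n v P i = ∑ S ∈ univ.filter (fun S : Finset (Fin n) => i ∉ S),
      P (insert i S) * (v (insert i S) - v S) := by
  classical
  rw [gainD]
  refine Finset.sum_nbij' (fun T => T.erase i) (fun S => insert i S) ?_ ?_ ?_ ?_ ?_
  · intro T hT
    simp only [Finset.mem_filter, Finset.mem_univ, true_and] at hT ⊢
    exact Finset.notMem_erase i T
  · intro S hS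
    simp only [Finset.mem_filter, Finset.mem_univ, true_and] at hS ⊢
    exact Finset.mem_insert_self i S
  · intro T hT
    simp only [Finset.mem_filter, Finset.mem_univ, true_and] at hT
    exact Finset.insert_erase hT
  · intro S hS
    simp only [Finset.mem_filter, Finset.mem_univ, true_and] at hS
    exact Finset.erase_insert hS
  · intro T hT
    simp only [Finset.mem_filter, Finset.mem_univ, true_and] at hT
    rw [Finset.insert_erase hT]

theorem stmt_18 (n : ℕ) (hn : 1 ≤ n) (P : Finset (Fin n) → ℝ)
    (hP0 : ∀ T : Finset (Fin n), 0 ≤ P T)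
    (hP1 : ∑ T : Finset (Fin n), P T = 1)
    (v : Finset (Fin n) → ℝ) (i : Fin n) :
    (dVal n v P i
      = (1 / (Nat.factorial n : ℝ)) * ∑ σ : Equiv.Perm (Fin n),
          ((P (xiSet n σ i) + P (insert i (xiSet n σ i))) * (Nat.factorial n : ℝ)
              / ((Nat.factorial (xiSet n σ i).card : ℝ)
                  * (Nat.factorial (n - (xiSet n σ i).card - 1) : ℝ)))
            * (v (insert i (xiSet n σ i)) - v (xiSet n σ i))) ∧
    (gainD n v P i
      = (1 / (Nat.factorial n : ℝ)) * ∑ σ : Equiv.Perm (Fin n),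
          ((Nat.factorial n : ℝ) * P (insert i (xiSet n σ i))
              / ((Nat.factorial (xiSet n σ i).card : ℝ)
                  * (Nat.factorial (n - (xiSet n σ i).card - 1) : ℝ)))
            * (v (insert i (xiSet n σ i)) - v (xiSet n σ i))) ∧
    (lossD n v P i
      = (1 / (Nat.factorial n : ℝ)) * ∑ σ : Equiv.Perm (Fin n),
          ((Nat.factorial n : ℝ) * P (xiSet n σ i)
              / ((Nat.factorial (xiSet n σ i).card : ℝ)
                  * (Nat.factorial (n - (xiSet n σ i).card - 1) : ℝ)))
            * (v (insert i (xiSet n σ i)) - v (xiSet n σ i))) := by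
  classical
  have hfact : ∀ S : Finset (Fin n),
      ((S.card).factorial : ℝ) ≠ 0 ∧ (((n - S.card - 1).factorial : ℝ)) ≠ 0 :=
    fun S => ⟨Nat.cast_ne_zero.mpr (Nat.factorial_ne_zero _),
      Nat.cast_ne_zero.mpr (Nat.factorial_ne_zero _)⟩
  have hnfact : ((n.factorial : ℝ)) ≠ 0 := Nat.cast_ne_zero.mpr (Nat.factorial_ne_zero _)
  have hgain : gainD n v P i
      = (1 / (Nat.factorial n : ℝ)) * ∑ σ : Equiv.Perm (Fin n),
          ((Nat.factorial n : ℝ) * P (insert i (xiSet n σ i))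
              / ((Nat.factorial (xiSet n σ i).card : ℝ)
                  * (Nat.factorial (n - (xiSet n σ i).card - 1) : ℝ)))
            * (v (insert i (xiSet n σ i)) - v (xiSet n σ i)) := by
    rw [sum_perm_eq n i (fun S => ((Nat.factorial n : ℝ) * P (insert i S)
        / ((Nat.factorial S.card : ℝ) * (Nat.factorial (n - S.card - 1) : ℝ)))
        * (v (insert i S) - v S)), gainD_eq, Finset.mul_sum]
    refine Finset.sum_congr rfl fun S _ => ?_
    obtain ⟨h1, h2⟩ := hfact S
    field_simp
  have hloss : lossD n v P i
      = (1 / (Nat.factorial n : ℝ)) * ∑ σ : Equiv.Perm (Fin n),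
          ((Nat.factorial n : ℝ) * P (xiSet n σ i)
              / ((Nat.factorial (xiSet n σ i).card : ℝ)
                  * (Nat.factorial (n - (xiSet n σ i).card - 1) : ℝ)))
            * (v (insert i (xiSet n σ i)) - v (xiSet n σ i)) := by
    rw [sum_perm_eq n i (fun S => ((Nat.factorial n : ℝ) * P S
        / ((Nat.factorial S.card : ℝ) * (Nat.factorial (n - S.card - 1) : ℝ)))
        * (v (insert i S) - v S)), lossD, Finset.mul_sum]
    refine Finset.sum_congr rfl fun S _ => ?_
    obtain ⟨h1, h2⟩ := hfact S
    field_simp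
  refine ⟨?_, hgain, hloss⟩
  rw [dVal, hgain, hloss, ← mul_add, ← Finset.sum_add_distrib]
  congr 1
  refine Finset.sum_congr rfl fun σ _ => ?_
  obtain ⟨h1, h2⟩ := hfact (xiSet n σ i)
  field_simp
  ring
end
end

section
/- Let n ≥ 1 and let v : Finset (Fin n) → ℝ be a payoff function. For a permutation σ of Fin n and i ∈ Fin n, let Ξ_i^σ denote the set of elements preceding i in the ordering σ, and let P be the prior P T = (|T|)!·(n−|T|)!/(n+1)!. Then, averaging uniformly over all n! permutations σ: (a) γ_i[v;P] = (1/n!)·∑_σ ((|Ξ_i^σ|+1)/(n+1)) · (v(Ξ_i^σ ∪ {i}) − v(Ξ_i^σ)); (b) λ_i[v;P] = (1/n!)·∑_σ ((n−|Ξ_i^σ|)/(n+1)) · (v(Ξ_i^σ ∪ {i}) − v(Ξ_i^σ)); and (c) the unbiased Shapley value satisfies Ψ̃_i[v] = (4/n!)·∑_σ ((|Ξ_i^σ|+1)·(n−|Ξ_i^σ|)/((n+1)·(n+2))) · (v(Ξ_i^σ ∪ {i}) − v(Ξ_i^σ)). -/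
open Finset

noncomputable section

namespace Stmt19Aux

variable {n : ℕ}

lemma card_filter_symm_lt (σ : Equiv.Perm (Fin n)) (c : Fin n) :
    (univ.filter fun j : Fin n => σ.symm j < c).card = (c : ℕ) := by
  have himg : (univ.filter fun j : Fin n => σ.symm j < c)
      = (Finset.Iio c).image σ := by
    ext j
    simp only [mem_filter, mem_univ, true_and, mem_image, Finset.mem_Iio]
    constructor
    · intro h; exact ⟨σ.symm j, h, by simp⟩
    · rintro ⟨x, hx, rfl⟩; simpa using hx
  rw [himg, Finset.card_image_of_injective _ σ.injective, Fin.card_Iio]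

lemma symm_apply_i {σ : Equiv.Perm (Fin n)} {i : Fin n} {S : Finset (Fin n)}
    (h : xiSet n σ i = S) : (σ.symm i : ℕ) = S.card := by
  rw [← h, xiSet, card_filter_symm_lt]

/-- complement part -/
def Tc (i : Fin n) (S : Finset (Fin n)) : Finset (Fin n) := (univ.erase i) \ S

lemma mem_Tc {i : Fin n} {S : Finset (Fin n)} {j : Fin n} :
    j ∈ Tc i S ↔ j ≠ i ∧ j ∉ S := by
  simp [Tc, and_comm]

lemma card_le (i : Fin n) (S : Finset (Fin n)) (hS : i ∉ S) : S.card ≤ n - 1 := by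
  have h1 : S ⊆ univ.erase i := fun x hx => mem_erase.2 ⟨fun h => hS (h ▸ hx), mem_univ x⟩
  have := card_le_card h1
  simpa [card_erase_of_mem, card_univ] using this

lemma card_Tc (i : Fin n) (S : Finset (Fin n)) (hS : i ∉ S) :
    (Tc i S).card = n - 1 - S.card := by
  have h1 : S ⊆ univ.erase i := fun x hx => mem_erase.2 ⟨fun h => hS (h ▸ hx), mem_univ x⟩
  rw [Tc, card_sdiff_of_subset h1]
  simp [card_erase_of_mem, card_univ]

lemma k_lt_n (i : Fin n) (S : Finset (Fin n)) (hS : i ∉ S) : S.card < n := by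
  have h1 := card_le i S hS
  have h2 : 0 < n := i.pos
  omega

/-- The glued function defining a permutation from two block bijections. -/
def fwd (i : Fin n) (S : Finset (Fin n))
    (a : Fin S.card ≃ {x // x ∈ S}) (b : Fin (n - 1 - S.card) ≃ {x // x ∈ Tc i S})
    (x : Fin n) : Fin n :=
  if h : (x : ℕ) < S.card then (a ⟨x, h⟩ : Fin n)
  else if h2 : (x : ℕ) = S.card then i
  else (b ⟨(x : ℕ) - (S.card + 1), by omega⟩ : Fin n)

lemma fwd_lt (i : Fin n) (S : Finset (Fin n))
    (a : Fin S.card ≃ {x // x ∈ S}) (b : Fin (n - 1 - S.card) ≃ {x // x ∈ Tc i S})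
    {x : Fin n} (hx : (x : ℕ) < S.card) : fwd i S a b x = (a ⟨x, hx⟩ : Fin n) :=
  dif_pos hx

lemma fwd_eq (i : Fin n) (S : Finset (Fin n))
    (a : Fin S.card ≃ {x // x ∈ S}) (b : Fin (n - 1 - S.card) ≃ {x // x ∈ Tc i S})
    {x : Fin n} (hx : (x : ℕ) = S.card) : fwd i S a b x = i := by
  rw [fwd, dif_neg (by omega), dif_pos hx]

lemma fwd_gt (i : Fin n) (S : Finset (Fin n))
    (a : Fin S.card ≃ {x // x ∈ S}) (b : Fin (n - 1 - S.card) ≃ {x // x ∈ Tc i S})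
    {x : Fin n} (hx : S.card < (x : ℕ)) :
    fwd i S a b x = (b ⟨(x : ℕ) - (S.card + 1), by omega⟩ : Fin n) := by
  rw [fwd, dif_neg (by omega), dif_neg (by omega)]

lemma fwd_inj (i : Fin n) (S : Finset (Fin n)) (hS : i ∉ S)
    (a : Fin S.card ≃ {x // x ∈ S}) (b : Fin (n - 1 - S.card) ≃ {x // x ∈ Tc i S}) :
    Function.Injective (fwd i S a b) := by
  have haS : ∀ p, ((a p : Fin n)) ∈ S := fun p => (a p).2
  have hbT : ∀ p, ((b p : Fin n)) ∈ Tc i S := fun p => (b p).2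
  intro x y hxy
  rcases lt_trichotomy (x : ℕ) S.card with hx | hx | hx <;>
    rcases lt_trichotomy (y : ℕ) S.card with hy | hy | hy
  · rw [fwd_lt i S a b hx, fwd_lt i S a b hy] at hxy
    have h := a.injective (Subtype.coe_injective hxy)
    simp only [Fin.mk.injEq] at h
    exact Fin.ext h
  · rw [fwd_lt i S a b hx, fwd_eq i S a b hy] at hxy
    have h1 := haS ⟨x, hx⟩
    rw [hxy] at h1
    exact absurd h1 hS
  · rw [fwd_lt i S a b hx, fwd_gt i S a b hy] at hxy
    have h1 := haS ⟨x, hx⟩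
    rw [hxy] at h1
    exact absurd h1 (mem_Tc.1 (hbT _)).2
  · rw [fwd_eq i S a b hx, fwd_lt i S a b hy] at hxy
    have h1 := haS ⟨y, hy⟩
    rw [← hxy] at h1
    exact absurd h1 hS
  · exact Fin.ext (by omega)
  · rw [fwd_eq i S a b hx, fwd_gt i S a b hy] at hxy
    exact absurd hxy.symm (mem_Tc.1 (hbT _)).1
  · rw [fwd_gt i S a b hx, fwd_lt i S a b hy] at hxy
    have h1 := haS ⟨y, hy⟩
    rw [← hxy] at h1
    exact absurd h1 (mem_Tc.1 (hbT _)).2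
  · rw [fwd_gt i S a b hx, fwd_eq i S a b hy] at hxy
    exact absurd hxy (mem_Tc.1 (hbT _)).1
  · rw [fwd_gt i S a b hx, fwd_gt i S a b hy] at hxy
    have h := b.injective (Subtype.coe_injective hxy)
    simp only [Fin.mk.injEq] at h
    exact Fin.ext (by omega)

/-- The glued permutation. -/
def Phi (i : Fin n) (S : Finset (Fin n)) (hS : i ∉ S)
    (a : Fin S.card ≃ {x // x ∈ S}) (b : Fin (n - 1 - S.card) ≃ {x // x ∈ Tc i S}) :
    Equiv.Perm (Fin n) :=
  Equiv.ofBijective _ (Finite.injective_iff_bijective.mp (fwd_inj i S hS a b))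

lemma Phi_apply (i : Fin n) (S : Finset (Fin n)) (hS : i ∉ S)
    (a : Fin S.card ≃ {x // x ∈ S}) (b : Fin (n - 1 - S.card) ≃ {x // x ∈ Tc i S})
    (x : Fin n) : Phi i S hS a b x = fwd i S a b x := rfl

lemma Phi_k (i : Fin n) (S : Finset (Fin n)) (hS : i ∉ S)
    (a : Fin S.card ≃ {x // x ∈ S}) (b : Fin (n - 1 - S.card) ≃ {x // x ∈ Tc i S}) :
    Phi i S hS a b ⟨S.card, k_lt_n i S hS⟩ = i := by
  rw [Phi_apply, fwd_eq i S a b rfl]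

lemma Phi_symm_i (i : Fin n) (S : Finset (Fin n)) (hS : i ∉ S)
    (a : Fin S.card ≃ {x // x ∈ S}) (b : Fin (n - 1 - S.card) ≃ {x // x ∈ Tc i S}) :
    (Phi i S hS a b).symm i = ⟨S.card, k_lt_n i S hS⟩ :=
  (Equiv.symm_apply_eq _).2 (Phi_k i S hS a b).symm

lemma Phi_mem_fiber (i : Fin n) (S : Finset (Fin n)) (hS : i ∉ S)
    (a : Fin S.card ≃ {x // x ∈ S}) (b : Fin (n - 1 - S.card) ≃ {x // x ∈ Tc i S}) :
    xiSet n (Phi i S hS a b) i = S := by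
  ext j
  simp only [xiSet, mem_filter, mem_univ, true_and]
  rw [Phi_symm_i i S hS a b, Fin.lt_def]
  constructor
  · intro hlt
    have hx : Phi i S hS a b ((Phi i S hS a b).symm j) = j := Equiv.apply_symm_apply _ j
    rw [Phi_apply, fwd_lt i S a b (by exact hlt)] at hx
    exact hx ▸ (a _).2
  · intro hjS
    by_contra hge
    push_neg at hge
    have hge2 : S.card ≤ (((Phi i S hS a b).symm j : Fin n) : ℕ) := by simpa using hge
    have hx : Phi i S hS a b ((Phi i S hS a b).symm j) = j := Equiv.apply_symm_apply _ j
    by_cases heq : (((Phi i S hS a b).symm j : Fin n) : ℕ) = S.card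
    · rw [Phi_apply, fwd_eq i S a b heq] at hx
      exact hS (hx ▸ hjS)
    · rw [Phi_apply, fwd_gt i S a b (by omega)] at hx
      have h := (mem_Tc).1 (hx ▸ (b _).2)
      exact h.2 hjS

lemma mem_S_of_lt (i : Fin n) (S : Finset (Fin n)) {σ : Equiv.Perm (Fin n)}
    (hfib : xiSet n σ i = S) {x : Fin n} (hx : (x : ℕ) < S.card) : σ x ∈ S := by
  rw [← hfib]
  simp only [xiSet, mem_filter, mem_univ, true_and, Equiv.symm_apply_apply]
  rw [Fin.lt_def]
  have h := symm_apply_i hfib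
  omega

lemma mem_Tc_of_gt (i : Fin n) (S : Finset (Fin n)) {σ : Equiv.Perm (Fin n)}
    (hfib : xiSet n σ i = S) {x : Fin n} (hx : S.card < (x : ℕ)) : σ x ∈ Tc i S := by
  have hsymm : (σ.symm i : ℕ) = S.card := symm_apply_i hfib
  rw [mem_Tc]
  constructor
  · intro h
    have h2 : σ.symm (σ x) = σ.symm i := congrArg σ.symm h
    rw [Equiv.symm_apply_apply] at h2
    have := congrArg Fin.val h2
    omega
  · intro hmem
    rw [← hfib] at hmem
    simp only [xiSet, mem_filter, mem_univ, true_and, Equiv.symm_apply_apply, Fin.lt_def] at hmem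
    omega

def psiA (i : Fin n) (S : Finset (Fin n)) (hS : i ∉ S) {σ : Equiv.Perm (Fin n)}
    (hfib : xiSet n σ i = S) : Fin S.card ≃ {x // x ∈ S} :=
  Equiv.ofBijective
    (fun p => ⟨σ ⟨p, lt_trans p.2 (k_lt_n i S hS)⟩, mem_S_of_lt i S hfib p.2⟩)
    ((Fintype.bijective_iff_injective_and_card _).2
      ⟨fun p q hpq => by
        have h := σ.injective (congrArg Subtype.val hpq)
        simp only [Fin.mk.injEq] at h
        exact Fin.ext h, by simp⟩)

def psiB (i : Fin n) (S : Finset (Fin n)) (hS : i ∉ S) {σ : Equiv.Perm (Fin n)}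
    (hfib : xiSet n σ i = S) : Fin (n - 1 - S.card) ≃ {x // x ∈ Tc i S} :=
  Equiv.ofBijective
    (fun p => ⟨σ ⟨S.card + 1 + p, by have h1 := p.2; have h2 := k_lt_n i S hS; omega⟩,
      mem_Tc_of_gt i S hfib (by show S.card < S.card + 1 + (p : ℕ); omega)⟩)
    ((Fintype.bijective_iff_injective_and_card _).2
      ⟨fun p q hpq => by
        have h := σ.injective (congrArg Subtype.val hpq)
        simp only [Fin.mk.injEq] at h
        exact Fin.ext (by omega),
       by simp only [Fintype.card_coe, Fintype.card_fin, card_Tc i S hS]⟩)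

lemma Phi_psi (i : Fin n) (S : Finset (Fin n)) (hS : i ∉ S) {σ : Equiv.Perm (Fin n)}
    (hfib : xiSet n σ i = S) :
    Phi i S hS (psiA i S hS hfib) (psiB i S hS hfib) = σ := by
  have hsymm : (σ.symm i : ℕ) = S.card := symm_apply_i hfib
  apply Equiv.ext
  intro x
  rw [Phi_apply]
  rcases lt_trichotomy (x : ℕ) S.card with h1 | h1 | h1
  · rw [fwd_lt _ _ _ _ h1]
    show ((psiA i S hS hfib ⟨x, h1⟩ : {x // x ∈ S}) : Fin n) = σ x
    simp only [psiA, Equiv.ofBijective_apply]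
  · rw [fwd_eq _ _ _ _ h1]
    have hx : σ.symm i = x := Fin.ext (by omega)
    rw [← hx, Equiv.apply_symm_apply]
  · rw [fwd_gt _ _ _ _ h1]
    show ((psiB i S hS hfib ⟨(x : ℕ) - (S.card + 1), _⟩ : {x // x ∈ Tc i S}) : Fin n) = σ x
    simp only [psiB, Equiv.ofBijective_apply]
    congr 1
    apply Fin.ext
    show S.card + 1 + ((x : ℕ) - (S.card + 1)) = (x : ℕ)
    omega

lemma psi_Phi (i : Fin n) (S : Finset (Fin n)) (hS : i ∉ S)
    (a : Fin S.card ≃ {x // x ∈ S}) (b : Fin (n - 1 - S.card) ≃ {x // x ∈ Tc i S})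
    (hfib : xiSet n (Phi i S hS a b) i = S) :
    psiA i S hS hfib = a ∧ psiB i S hS hfib = b := by
  constructor
  · apply Equiv.ext
    intro p
    apply Subtype.ext
    show (Phi i S hS a b ⟨p, _⟩ : Fin n) = (a p : Fin n)
    rw [Phi_apply, fwd_lt i S a b (by exact p.2)]
  · apply Equiv.ext
    intro p
    apply Subtype.ext
    show (Phi i S hS a b ⟨S.card + 1 + p, _⟩ : Fin n) = (b p : Fin n)
    rw [Phi_apply, fwd_gt i S a b (by show S.card < S.card + 1 + (p : ℕ); omega)]
    congr 1
    congr 1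
    apply Fin.ext
    show S.card + 1 + (p : ℕ) - (S.card + 1) = (p : ℕ)
    omega

lemma card_fiber (i : Fin n) (S : Finset (Fin n)) (hS : i ∉ S) :
    (univ.filter (fun σ : Equiv.Perm (Fin n) => xiSet n σ i = S)).card
      = S.card.factorial * (n - 1 - S.card).factorial := by
  have key := Finset.card_bij'
    (i := fun (σ : Equiv.Perm (Fin n)) (hσ : σ ∈ univ.filter
        (fun σ : Equiv.Perm (Fin n) => xiSet n σ i = S)) =>
      ((psiA i S hS ((mem_filter.1 hσ).2), psiB i S hS ((mem_filter.1 hσ).2)) :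
        (Fin S.card ≃ {x // x ∈ S}) × (Fin (n - 1 - S.card) ≃ {x // x ∈ Tc i S})))
    (j := fun ab _ => Phi i S hS ab.1 ab.2)
    (fun σ hσ => mem_univ _)
    (fun ab hab => mem_filter.2 ⟨mem_univ _, Phi_mem_fiber i S hS ab.1 ab.2⟩)
    (fun σ hσ => Phi_psi i S hS (mem_filter.1 hσ).2)
    (fun ab hab => by
      have h := psi_Phi i S hS ab.1 ab.2 (Phi_mem_fiber i S hS ab.1 ab.2)
      exact Prod.ext h.1 h.2)
  rw [key, Finset.card_univ, Fintype.card_prod,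
    Fintype.card_equiv ((Fintype.equivFinOfCardEq (Fintype.card_coe S)).symm),
    Fintype.card_equiv ((Fintype.equivFinOfCardEq
      ((Fintype.card_coe (Tc i S)).trans (card_Tc i S hS))).symm)]
  simp


lemma i_not_mem_xiSet (i : Fin n) (σ : Equiv.Perm (Fin n)) : i ∉ xiSet n σ i := by
  simp [xiSet]

lemma sum_perm (i : Fin n) (F : Finset (Fin n) → ℝ) :
    ∑ σ : Equiv.Perm (Fin n), F (xiSet n σ i)
      = ∑ S ∈ univ.filter (fun S : Finset (Fin n) => i ∉ S),
          ((S.card.factorial * (n - 1 - S.card).factorial : ℕ) : ℝ) * F S := by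
  rw [← Finset.sum_fiberwise_of_maps_to'
    (g := fun σ : Equiv.Perm (Fin n) => xiSet n σ i)
    (t := univ.filter (fun S : Finset (Fin n) => i ∉ S))
    (fun σ _ => mem_filter.2 ⟨mem_univ _, i_not_mem_xiSet i σ⟩) F]
  refine Finset.sum_congr rfl (fun S hSm => ?_)
  rw [Finset.sum_const, card_fiber i S (mem_filter.1 hSm).2, nsmul_eq_mul]

end Stmt19Aux

open Stmt19Aux in
theorem stmt_19 (n : ℕ) (hn : 1 ≤ n) (P : Finset (Fin n) → ℝ)
    (hP : ∀ T : Finset (Fin n),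
      P T = (Nat.factorial T.card * Nat.factorial (n - T.card) : ℝ)
              / (Nat.factorial (n + 1) : ℝ))
    (v : Finset (Fin n) → ℝ) (i : Fin n) :
    (gainD n v P i
      = (1 / (Nat.factorial n : ℝ)) * ∑ σ : Equiv.Perm (Fin n),
          (((xiSet n σ i).card + 1 : ℝ) / ((n : ℝ) + 1))
            * (v (insert i (xiSet n σ i)) - v (xiSet n σ i))) ∧
    (lossD n v P i
      = (1 / (Nat.factorial n : ℝ)) * ∑ σ : Equiv.Perm (Fin n),
          (((n : ℝ) - (xiSet n σ i).card) / ((n : ℝ) + 1))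
            * (v (insert i (xiSet n σ i)) - v (xiSet n σ i))) ∧
    (ushapley n v i
      = (4 / (Nat.factorial n : ℝ)) * ∑ σ : Equiv.Perm (Fin n),
          ((((xiSet n σ i).card + 1 : ℝ) * ((n : ℝ) - (xiSet n σ i).card))
              / (((n : ℝ) + 1) * ((n : ℝ) + 2)))
            * (v (insert i (xiSet n σ i)) - v (xiSet n σ i))) := by
  have hfact : ((Nat.factorial n : ℝ)) ≠ 0 := Nat.cast_ne_zero.2 (Nat.factorial_ne_zero n)
  -- reindexing lemma : sums over T ∋ i become sums over S ∌ i
  have reindex : ∀ G : Finset (Fin n) → Finset (Fin n) → ℝ,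
      (∑ T ∈ univ.filter (fun T : Finset (Fin n) => i ∈ T), G T (T.erase i))
        = ∑ S ∈ univ.filter (fun S : Finset (Fin n) => i ∉ S), G (insert i S) S := by
    intro G
    refine Finset.sum_nbij' (fun T => T.erase i) (fun S => insert i S)
      (fun T hT => mem_filter.2 ⟨mem_univ _, notMem_erase _ _⟩)
      (fun S hS => mem_filter.2 ⟨mem_univ _, mem_insert_self _ _⟩)
      (fun T hT => insert_erase (mem_filter.1 hT).2)
      (fun S hS => erase_insert (mem_filter.1 hS).2)
      (fun T hT => by rw [insert_erase (mem_filter.1 hT).2])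
  refine ⟨?_, ?_, ?_⟩
  · -- part (a)
    rw [gainD, sum_perm i (fun S => ((S.card + 1 : ℝ) / ((n : ℝ) + 1))
      * (v (insert i S) - v S)), Finset.mul_sum]
    rw [show (∑ T ∈ univ.filter (fun T : Finset (Fin n) => i ∈ T),
        P T * (v T - v (T.erase i)))
      = ∑ S ∈ univ.filter (fun S : Finset (Fin n) => i ∉ S),
          P (insert i S) * (v (insert i S) - v S) from
        reindex (fun T S => P T * (v T - v S))]
    refine Finset.sum_congr rfl (fun S hSm => ?_)
    have hS : i ∉ S := (mem_filter.1 hSm).2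
    have hk := card_le i S hS
    set k := S.card with hk'
    set m := n - 1 - k with hm'
    have hnm : n = k + 1 + m := by omega
    rw [hP (insert i S), card_insert_of_notMem hS]
    rw [show n - (k + 1) = m from by omega, Nat.factorial_succ n, Nat.factorial_succ k]
    have hcn : (n : ℝ) = (k : ℝ) + 1 + (m : ℝ) := by exact_mod_cast congrArg (Nat.cast (R := ℝ)) hnm
    push_cast
    rw [hcn]
    have h2 : ((Nat.factorial k : ℝ)) ≠ 0 := Nat.cast_ne_zero.2 (Nat.factorial_ne_zero k)
    have h3 : ((Nat.factorial m : ℝ)) ≠ 0 := Nat.cast_ne_zero.2 (Nat.factorial_ne_zero m)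
    have h4 : ((k : ℝ) + 1 + (m : ℝ)) + 1 ≠ 0 := by have := (Nat.cast_nonneg (α := ℝ) k); have := (Nat.cast_nonneg (α := ℝ) m); exact ne_of_gt (by linarith)
    field_simp
  · -- part (b)
    rw [lossD, sum_perm i (fun S => (((n : ℝ) - S.card) / ((n : ℝ) + 1))
      * (v (insert i S) - v S)), Finset.mul_sum]
    refine Finset.sum_congr rfl (fun S hSm => ?_)
    have hS : i ∉ S := (mem_filter.1 hSm).2
    have hk := card_le i S hS
    set k := S.card with hk'
    set m := n - 1 - k with hm'
    have hnm : n = k + 1 + m := by omega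
    rw [hP S]
    rw [show n - k = m + 1 from by omega, Nat.factorial_succ n, Nat.factorial_succ m]
    have hcn : (n : ℝ) = (k : ℝ) + 1 + (m : ℝ) := by exact_mod_cast congrArg (Nat.cast (R := ℝ)) hnm
    push_cast
    rw [hcn]
    have h2 : ((Nat.factorial k : ℝ)) ≠ 0 := Nat.cast_ne_zero.2 (Nat.factorial_ne_zero k)
    have h3 : ((Nat.factorial m : ℝ)) ≠ 0 := Nat.cast_ne_zero.2 (Nat.factorial_ne_zero m)
    have h4 : ((k : ℝ) + 1 + (m : ℝ)) + 1 ≠ 0 := by have := (Nat.cast_nonneg (α := ℝ) k); have := (Nat.cast_nonneg (α := ℝ) m); exact ne_of_gt (by linarith)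
    field_simp
    ring
  · -- part (c)
    rw [ushapley, sum_perm i (fun S => (((S.card + 1 : ℝ) * ((n : ℝ) - S.card))
      / (((n : ℝ) + 1) * ((n : ℝ) + 2))) * (v (insert i S) - v S))]
    rw [show (∑ T ∈ univ.filter (fun T : Finset (Fin n) => i ∈ T),
        ((Nat.factorial T.card * Nat.factorial (n - T.card + 1) : ℝ)
          / (Nat.factorial (n + 2) : ℝ)) * (v T - v (T.erase i)))
      = ∑ S ∈ univ.filter (fun S : Finset (Fin n) => i ∉ S),
          ((Nat.factorial (insert i S).card
              * Nat.factorial (n - (insert i S).card + 1) : ℝ)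
            / (Nat.factorial (n + 2) : ℝ)) * (v (insert i S) - v S) from
        reindex (fun T S =>
          ((Nat.factorial T.card * Nat.factorial (n - T.card + 1) : ℝ)
            / (Nat.factorial (n + 2) : ℝ)) * (v T - v S))]
    rw [Finset.mul_sum, Finset.mul_sum]
    refine Finset.sum_congr rfl (fun S hSm => ?_)
    have hS : i ∉ S := (mem_filter.1 hSm).2
    have hk := card_le i S hS
    set k := S.card with hk'
    set m := n - 1 - k with hm'
    have hnm : n = k + 1 + m := by omega
    rw [card_insert_of_notMem hS]
    rw [show n - (k + 1) + 1 = m + 1 from by omega,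
      Nat.factorial_succ (n + 1), Nat.factorial_succ n,
      Nat.factorial_succ k, Nat.factorial_succ m]
    have hcn : (n : ℝ) = (k : ℝ) + 1 + (m : ℝ) := by exact_mod_cast congrArg (Nat.cast (R := ℝ)) hnm
    push_cast
    rw [hcn]
    have h2 : ((Nat.factorial k : ℝ)) ≠ 0 := Nat.cast_ne_zero.2 (Nat.factorial_ne_zero k)
    have h3 : ((Nat.factorial m : ℝ)) ≠ 0 := Nat.cast_ne_zero.2 (Nat.factorial_ne_zero m)
    have h4 : ((k : ℝ) + 1 + (m : ℝ)) + 1 ≠ 0 := by have := (Nat.cast_nonneg (α := ℝ) k); have := (Nat.cast_nonneg (α := ℝ) m); exact ne_of_gt (by linarith)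
    have h5 : ((k : ℝ) + 1 + (m : ℝ)) + 2 ≠ 0 := by have := (Nat.cast_nonneg (α := ℝ) k); have := (Nat.cast_nonneg (α := ℝ) m); exact ne_of_gt (by linarith)
    field_simp
    ring
end
end
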